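/- arXiv:2108.03666 — 6 statements merged into one kernel-verified Lean document; each statement's English description precedes it below -/
import Mathlib

section
/- Define the depth Dp(L) of a K-closed subset L of an FSI-template by the recursion: Dp(L) ≤ 0 iff L = ∅; Dp(L) ≤ ζ+1 iff there is L* ⊆ L with |L*| ≤ 1, L* disjoint from every A ∈ I_t for t ∈ L, Dp(L \ L*) < ζ+1, and for every t ∈ L*, L \ L* ∈ I_t and L \ L* is K-closed; Dp(L) ≤ ζ for limit ζ iff L is the union of a directed increasing family ⟨L_a : a ∈ M⟩ of K-closed sets each of depth < ζ such that every A ∈ I_t with t ∈ L and A ⊆ L is contained in some L_a. Then for K-closed sets L₁ ⊆ L₂: (α) Dp(L₁) ≤ Dp(L₂), and (β) if L₁ ∈ I_t for some t ∈ L₂, then Dp(L₁) < Dp(L₂) (or both are ∞). -/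
universe u

/-- An FSI-template on a linear order `L`. -/
def IsFSITemplate {L : Type u} [LinearOrder L] (I : L → Set (Set L)) : Prop :=
  ∀ t : L, (∀ A ∈ I t, A ⊆ {s | s < t}) ∧ (∅ ∈ I t) ∧
    (∀ A ∈ I t, ∀ B, B ⊆ A → B ∈ I t) ∧ (∀ A ∈ I t, ∀ B ∈ I t, A ∪ B ∈ I t)

/-- A memory choice for a template. -/
def IsMemoryChoice {L : Type u} [LinearOrder L] (I : L → Set (Set L)) (K : L → Set L) : Prop :=
  (∀ t, K t ∈ I t) ∧ ∀ t, ∀ s ∈ K t, K s ⊆ K t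

/-- A set `A` is `K`-closed when `t ∈ A → K t ⊆ A`. -/
def KClosed {L : Type u} [LinearOrder L] (K : L → Set L) (A : Set L) : Prop :=
  ∀ t ∈ A, K t ⊆ A

/-- `DpLe I K S ζ` formalizes "the (𝔱,K)-depth of the K-closed set `S` is at most `ζ`":
`Dp(S) ≤ 0` iff `S = ∅`; `Dp(S) ≤ ζ+1` via removal of a set `L*` of at most one point,
disjoint from every `A ∈ I t` (`t ∈ S`), with `S \ L* ∈ I t` for `t ∈ L*`, `S \ L*`
K-closed and of depth `≤ ζ`; `Dp(S) ≤ ζ` for `ζ` limit via a directed increasing family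
of K-closed sets of smaller depth whose union is `S` and which absorbs every `A ∈ I t`
with `t ∈ S`, `A ⊆ S`. -/
inductive DpLe {L : Type u} [LinearOrder L] (I : L → Set (Set L)) (K : L → Set L) :
    Set L → Ordinal.{u} → Prop where
  | zero : DpLe I K ∅ 0
  | succ (S : Set L) (ζ : Ordinal.{u}) (Lstar : Set L)
      (hsub : Lstar ⊆ S) (hsing : Lstar.Subsingleton)
      (hdisj : ∀ t ∈ S, ∀ A ∈ I t, A ∩ Lstar = ∅)
      (hcl : KClosed K (S \ Lstar))
      (hmem : ∀ t ∈ Lstar, S \ Lstar ∈ I t)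
      (h : DpLe I K (S \ Lstar) ζ) : DpLe I K S (ζ + 1)
  | limit (S : Set L) (ζ : Ordinal.{u}) (hζ : Order.IsSuccLimit ζ) (𝒜 : Set (Set L))
      (hcl : ∀ A ∈ 𝒜, KClosed K A) (hsub : ∀ A ∈ 𝒜, A ⊆ S)
      (hdir : DirectedOn (· ⊆ ·) 𝒜) (hU : ⋃₀ 𝒜 = S)
      (hcov : ∀ t ∈ S, ∀ A ∈ I t, A ⊆ S → ∃ B ∈ 𝒜, A ⊆ B)
      (d : Set L → Ordinal.{u}) (hd : ∀ A ∈ 𝒜, d A < ζ)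
      (h : ∀ A ∈ 𝒜, DpLe I K A (d A)) : DpLe I K S ζ

lemma dple_mono {L : Type u} [LinearOrder L] (I : L → Set (Set L)) (K : L → Set L)
    (hI : ∀ t : L, ∀ A ∈ I t, ∀ B, B ⊆ A → B ∈ I t) (hK : ∀ t, K t ∈ I t)
    (S : Set L) (ζ : Ordinal.{u}) (h : DpLe I K S ζ) :
    ∀ L₁, KClosed K L₁ → L₁ ⊆ S → DpLe I K L₁ ζ := by
  induction h with
  | zero =>
      intro L₁ _ hs
      rw [Set.subset_empty_iff] at hs
      subst hs; exact .zero
  | succ S ζ Lstar hsub hsing hdisj hcl hmem h ih =>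
      intro L₁ h1 hs
      have hdisj1 : ∀ t ∈ L₁, K t ∩ Lstar = ∅ := fun t ht =>
        hdisj t (hs ht) (K t) (hK t)
      have hLsub : L₁ \ (L₁ ∩ Lstar) ⊆ S \ Lstar := by
        intro x hx
        refine ⟨hs hx.1, fun hxL => hx.2 ⟨hx.1, hxL⟩⟩
      have hcl1 : KClosed K (L₁ \ (L₁ ∩ Lstar)) := by
        intro t ht s hsK
        have hsL1 : s ∈ L₁ := h1 t ht.1 hsK
        refine ⟨hsL1, fun hcon => ?_⟩
        have : s ∈ K t ∩ Lstar := ⟨hsK, hcon.2⟩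
        rw [hdisj1 t ht.1] at this
        exact this
      refine DpLe.succ L₁ ζ (L₁ ∩ Lstar) Set.inter_subset_left
        (hsing.anti Set.inter_subset_right)
        (fun t ht A hA => ?_) hcl1 (fun t ht => ?_) (ih _ hcl1 hLsub)
      · have := hdisj t (hs ht) A hA
        rw [Set.eq_empty_iff_forall_notMem] at this ⊢
        exact fun x hx => this x ⟨hx.1, hx.2.2⟩
      · exact hI t _ (hmem t ht.2) _ hLsub
  | limit S ζ hζ 𝒜 hcl hsub hdir hU hcov d hd h ih =>
      intro L₁ h1 hs
      classical
      set 𝒜' : Set (Set L) := (fun A => A ∩ L₁) '' 𝒜 with h𝒜'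
      have hmemiff : ∀ B, B ∈ 𝒜' ↔ ∃ A, A ∈ 𝒜 ∧ A ∩ L₁ = B := by
        intro B; simp [h𝒜', Set.mem_image]
      set d' : Set L → Ordinal.{u} := fun B =>
        if hB : ∃ A, A ∈ 𝒜 ∧ A ∩ L₁ = B then d hB.choose else 0 with hd'
      refine DpLe.limit L₁ ζ hζ 𝒜' (fun B hB => ?_) (fun B hB => ?_) ?_ ?_
        (fun t ht A hA hAs => ?_) d' (fun B hB => ?_) (fun B hB => ?_)
      · -- K-closed
        obtain ⟨A, hA, rfl⟩ := hB
        intro t ht s hsK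
        exact ⟨hcl A hA t ht.1 hsK, h1 t ht.2 hsK⟩
      · obtain ⟨A, hA, rfl⟩ := hB
        exact Set.inter_subset_right
      · -- directed
        rintro B₁ ⟨A₁, hA₁, rfl⟩ B₂ ⟨A₂, hA₂, rfl⟩
        obtain ⟨A₃, hA₃, h13, h23⟩ := hdir A₁ hA₁ A₂ hA₂
        exact ⟨A₃ ∩ L₁, ⟨A₃, hA₃, rfl⟩,
          Set.inter_subset_inter_left _ h13, Set.inter_subset_inter_left _ h23⟩
      · -- union
        apply Set.Subset.antisymm
        · rintro x ⟨B, ⟨A, hA, rfl⟩, hx⟩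
          exact hx.2
        · intro x hx
          have : x ∈ ⋃₀ 𝒜 := hU ▸ hs hx
          obtain ⟨A, hA, hxA⟩ := this
          exact ⟨A ∩ L₁, ⟨A, hA, rfl⟩, hxA, hx⟩
      · -- cover
        obtain ⟨B, hB, hAB⟩ := hcov t (hs ht) A hA (hAs.trans hs)
        exact ⟨B ∩ L₁, ⟨B, hB, rfl⟩, Set.subset_inter hAB hAs⟩
      · -- d' < ζ
        rw [hmemiff] at hB
        show (if hB : ∃ A ∈ 𝒜, A ∩ L₁ = B then d hB.choose else 0) < ζ
        rw [dif_pos hB]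
        exact hd _ hB.choose_spec.1
      · -- depth proof
        rw [hmemiff] at hB
        show DpLe I K B (if hB : ∃ A ∈ 𝒜, A ∩ L₁ = B then d hB.choose else 0)
        rw [dif_pos hB]
        obtain ⟨hAmem, hAeq⟩ := hB.choose_spec
        have hclAB : KClosed K (hB.choose ∩ L₁) := by
          intro t ht s hsK
          exact ⟨hcl _ hAmem t ht.1 hsK, h1 t ht.2 hsK⟩
        have := ih _ hAmem (hB.choose ∩ L₁) hclAB Set.inter_subset_left
        rwa [hAeq] at this

/-- Monotonicity of depth: for K-closed `L₁ ⊆ L₂`, (α) `Dp(L₁) ≤ Dp(L₂)`; and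
(β) if moreover `L₁ ∈ I t` for some `t ∈ L₂`, then `Dp(L₁) < Dp(L₂)` (or both are `∞`). -/
theorem stmt2 {L : Type u} [LinearOrder L] (I : L → Set (Set L)) (K : L → Set L)
    (hI : IsFSITemplate I) (hK : IsMemoryChoice I K)
    (L₁ L₂ : Set L) (h1 : KClosed K L₁) (h2 : KClosed K L₂) (hsub : L₁ ⊆ L₂) :
    (∀ ζ, DpLe I K L₂ ζ → DpLe I K L₁ ζ) ∧
    ((∃ t ∈ L₂, L₁ ∈ I t) → ∀ ζ, DpLe I K L₂ ζ → ∃ ξ < ζ, DpLe I K L₁ ξ) := by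
  have hIdown : ∀ t : L, ∀ A ∈ I t, ∀ B, B ⊆ A → B ∈ I t := fun t => (hI t).2.2.1
  have hKmem : ∀ t, K t ∈ I t := hK.1
  constructor
  · exact fun ζ h => dple_mono I K hIdown hKmem L₂ ζ h L₁ h1 hsub
  · rintro ⟨t, ht, hL₁⟩ ζ h
    cases h with
    | zero => exact absurd ht (Set.notMem_empty t)
    | succ S ζ Lstar hsubst hsing hdisj hcl hmem h =>
        refine ⟨ζ, ?_, ?_⟩
        · rw [Ordinal.add_one_eq_succ]; exact Order.lt_succ ζ
        · refine dple_mono I K hIdown hKmem _ ζ h L₁ h1 ?_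
          have hdis := hdisj t ht L₁ hL₁
          intro x hx
          refine ⟨hsub hx, fun hxL => ?_⟩
          have : x ∈ L₁ ∩ Lstar := ⟨hx, hxL⟩
          rw [hdis] at this
          exact this
    | limit S ζ hζ 𝒜 hcl hsubA hdir hU hcov d hd h =>
        obtain ⟨B, hB, hL₁B⟩ := hcov t ht L₁ hL₁ hsub
        exact ⟨d B, hd B hB, dple_mono I K hIdown hKmem B (d B) (h B hB) L₁ h1 hL₁B⟩
end

section
/- With Dp as defined by the depth recursion for a smooth FSI-template (Dp(L) < ∞ for the whole order): if L₁ ⊆ L₂ ⊆ L are K-closed, then the restricted template t↾L₂ (with ideals I_t ∩ 𝒫(L₂)) is an FSI-template, L₁ is K↾L₂-closed, and the depth of L₁ computed inside t↾L₂ equals its depth computed in t. -/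
universe u

lemma dp_forward {L : Type u} [LinearOrder L] (I : L → Set (Set L)) (K : L → Set L)
    (L₂ : Set L) (S : Set L) (ζ : Ordinal.{u}) (h : DpLe I K S ζ) (hS : S ⊆ L₂) :
    DpLe (fun t : L₂ => {A : Set L₂ | Subtype.val '' A ∈ I ↑t})
      (fun t : L₂ => {s : L₂ | (s : L) ∈ K ↑t}) (Subtype.val ⁻¹' S) ζ := by
  revert hS
  induction h with
  | zero =>
      intro _
      simpa using DpLe.zero
  | succ S ζ Lstar hsubL hsing hdisj hcl hmem h ih =>
      intro hS
      have hS' : S \ Lstar ⊆ L₂ := fun x hx => hS hx.1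
      have ih' := ih hS'
      have hdiff : (Subtype.val ⁻¹' (S \ Lstar) : Set L₂)
          = Subtype.val ⁻¹' S \ Subtype.val ⁻¹' Lstar := rfl
      refine DpLe.succ _ ζ (Subtype.val ⁻¹' Lstar) (Set.preimage_mono hsubL)
        (fun x hx y hy => Subtype.coe_injective (hsing hx hy)) ?_ ?_ ?_ ?_
      · intro t ht A hA
        have h0 := hdisj ↑t ht (Subtype.val '' A) hA
        ext x
        simp only [Set.mem_inter_iff, Set.mem_preimage, Set.mem_empty_iff_false, iff_false,
          not_and]
        intro hxA hxL
        have : (x : L) ∈ Subtype.val '' A ∩ Lstar := ⟨Set.mem_image_of_mem _ hxA, hxL⟩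
        rw [h0] at this
        exact this
      · intro t ht s hs
        exact hcl ↑t ⟨ht.1, ht.2⟩ hs
      · intro t ht
        show Subtype.val '' (Subtype.val ⁻¹' S \ Subtype.val ⁻¹' Lstar) ∈ I ↑t
        rw [← hdiff, Subtype.image_preimage_coe,
          Set.inter_eq_self_of_subset_right hS']
        exact hmem ↑t ht
      · rw [← hdiff]; exact ih'
  | limit S ζ hζ 𝒜 hclA hsubA hdir hU hcov d hd h ih =>
      intro hS
      refine DpLe.limit _ ζ hζ ((fun B => (Subtype.val ⁻¹' B : Set L₂)) '' 𝒜) ?_ ?_ ?_ ?_ ?_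
        (fun T => d (Subtype.val '' T)) ?_ ?_
      · rintro A ⟨B, hB, rfl⟩ t ht s hs
        exact hclA B hB ↑t ht hs
      · rintro A ⟨B, hB, rfl⟩
        exact Set.preimage_mono (hsubA B hB)
      · rintro A ⟨B, hB, rfl⟩ A' ⟨C, hC, rfl⟩
        obtain ⟨D, hD, hBD, hCD⟩ := hdir B hB C hC
        exact ⟨Subtype.val ⁻¹' D, ⟨D, hD, rfl⟩, Set.preimage_mono hBD, Set.preimage_mono hCD⟩
      · ext x
        simp only [Set.mem_sUnion, Set.mem_image, Set.mem_preimage]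
        constructor
        · rintro ⟨A, ⟨B, hB, rfl⟩, hx⟩
          rw [← hU]; exact ⟨B, hB, hx⟩
        · intro hx
          rw [← hU] at hx
          obtain ⟨B, hB, hxB⟩ := hx
          exact ⟨Subtype.val ⁻¹' B, ⟨B, hB, rfl⟩, hxB⟩
      · intro t ht A hA hAsub
        have hA2 : Subtype.val '' A ⊆ S := by
          intro x hx
          obtain ⟨x₀, hx₀, rfl⟩ := hx
          exact hAsub hx₀
        obtain ⟨B, hB, hAB⟩ := hcov ↑t ht (Subtype.val '' A) hA hA2
        refine ⟨Subtype.val ⁻¹' B, ⟨B, hB, rfl⟩, ?_⟩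
        intro x hx
        exact hAB (Set.mem_image_of_mem _ hx)
      · rintro A ⟨B, hB, rfl⟩
        show d (Subtype.val '' ((Subtype.val ⁻¹' B : Set L₂))) < ζ
        rw [Subtype.image_preimage_coe, Set.inter_eq_self_of_subset_right
          ((hsubA B hB).trans hS)]
        exact hd B hB
      · rintro A ⟨B, hB, rfl⟩
        have := ih B hB ((hsubA B hB).trans hS)
        show DpLe _ _ (Subtype.val ⁻¹' B : Set L₂)
          (d (Subtype.val '' ((Subtype.val ⁻¹' B : Set L₂))))
        rwa [Subtype.image_preimage_coe, Set.inter_eq_self_of_subset_right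
          ((hsubA B hB).trans hS)]

lemma dp_backward {L : Type u} [LinearOrder L] (I : L → Set (Set L)) (K : L → Set L)
    (hI : IsFSITemplate I) (L₂ : Set L) (h2 : KClosed K L₂)
    (T : Set L₂) (ζ : Ordinal.{u})
    (h : DpLe (fun t : L₂ => {A : Set L₂ | Subtype.val '' A ∈ I ↑t})
      (fun t : L₂ => {s : L₂ | (s : L) ∈ K ↑t}) T ζ) :
    DpLe I K (Subtype.val '' T) ζ := by
  induction h with
  | zero => simpa using DpLe.zero
  | succ T ζ Lstar' hsubL hsing hdisj hcl hmem h ih =>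
      have hdiff : Subtype.val '' T \ Subtype.val '' Lstar' = Subtype.val '' (T \ Lstar') :=
        (Set.image_diff Subtype.coe_injective _ _).symm
      refine DpLe.succ _ ζ (Subtype.val '' Lstar') (Set.image_mono hsubL)
        (hsing.image _) ?_ ?_ ?_ ?_
      · rintro t ⟨t₀, ht₀, rfl⟩ A hA
        have hA' : Subtype.val '' (Subtype.val ⁻¹' A : Set L₂) ∈ I ↑t₀ := by
          rw [Subtype.image_preimage_coe]
          exact (hI ↑t₀).2.2.1 A hA _ Set.inter_subset_right
        have h0 := hdisj t₀ ht₀ (Subtype.val ⁻¹' A) hA'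
        ext x
        simp only [Set.mem_inter_iff, Set.mem_empty_iff_false, iff_false, not_and]
        rintro hxA ⟨x₀, hx₀, rfl⟩
        have : x₀ ∈ (Subtype.val ⁻¹' A : Set L₂) ∩ Lstar' := ⟨hxA, hx₀⟩
        rw [h0] at this
        exact this
      · rw [hdiff]
        rintro t ⟨t₀, ht₀, rfl⟩ s hs
        have hsL₂ : s ∈ L₂ := h2 ↑t₀ t₀.2 hs
        exact ⟨⟨s, hsL₂⟩, hcl t₀ ht₀ hs, rfl⟩
      · rintro t ⟨t₀, ht₀, rfl⟩
        rw [hdiff]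
        exact hmem t₀ ht₀
      · rw [hdiff]; exact ih
  | limit T ζ hζ 𝒜' hclA hsubA hdir hU hcov d hd h ih =>
      refine DpLe.limit _ ζ hζ ((fun B => Subtype.val '' B) '' 𝒜') ?_ ?_ ?_ ?_ ?_
        (fun B => d (Subtype.val ⁻¹' B)) ?_ ?_
      · rintro A ⟨B, hB, rfl⟩ t ⟨t₀, ht₀, rfl⟩ s hs
        have hsL₂ : s ∈ L₂ := h2 ↑t₀ t₀.2 hs
        exact ⟨⟨s, hsL₂⟩, hclA B hB t₀ ht₀ hs, rfl⟩
      · rintro A ⟨B, hB, rfl⟩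
        exact Set.image_mono (hsubA B hB)
      · rintro A ⟨B, hB, rfl⟩ A' ⟨C, hC, rfl⟩
        obtain ⟨D, hD, hBD, hCD⟩ := hdir B hB C hC
        exact ⟨Subtype.val '' D, ⟨D, hD, rfl⟩, Set.image_mono hBD, Set.image_mono hCD⟩
      · ext x
        simp only [Set.mem_sUnion, Set.mem_image]
        constructor
        · rintro ⟨A, ⟨B, hB, rfl⟩, x₀, hx₀, rfl⟩
          exact ⟨x₀, by rw [← hU]; exact ⟨B, hB, hx₀⟩, rfl⟩
        · rintro ⟨x₀, hx₀, rfl⟩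
          rw [← hU] at hx₀
          obtain ⟨B, hB, hxB⟩ := hx₀
          exact ⟨Subtype.val '' B, ⟨B, hB, rfl⟩, x₀, hxB, rfl⟩
      · rintro t ⟨t₀, ht₀, rfl⟩ A hA hAsub
        have hAL₂ : A ⊆ L₂ := hAsub.trans (Subtype.coe_image_subset _ _)
        have hA' : Subtype.val '' (Subtype.val ⁻¹' A : Set L₂) ∈ I ↑t₀ := by
          rw [Subtype.image_preimage_coe, Set.inter_eq_self_of_subset_right hAL₂]
          exact hA
        have hpre : (Subtype.val ⁻¹' A : Set L₂) ⊆ T := by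
          intro x hx
          obtain ⟨x₀, hx₀, hx₀eq⟩ := hAsub hx
          exact (Subtype.coe_injective hx₀eq) ▸ hx₀
        obtain ⟨B, hB, hAB⟩ := hcov t₀ ht₀ (Subtype.val ⁻¹' A) hA' hpre
        refine ⟨Subtype.val '' B, ⟨B, hB, rfl⟩, ?_⟩
        intro a ha
        exact ⟨⟨a, hAL₂ ha⟩, hAB ha, rfl⟩
      · rintro A ⟨B, hB, rfl⟩
        show d (Subtype.val ⁻¹' (Subtype.val '' B)) < ζ
        rw [Set.preimage_image_eq _ Subtype.coe_injective]
        exact hd B hB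
      · rintro A ⟨B, hB, rfl⟩
        show DpLe I K (Subtype.val '' B) (d (Subtype.val ⁻¹' (Subtype.val '' B)))
        rw [Set.preimage_image_eq _ Subtype.coe_injective]
        exact ih B hB

/-- Restriction of a template to a K-closed subset `L₂` preserves templatehood,
K-closedness and depth: `𝔱↾L₂` (with ideals `I_t ∩ 𝒫(L₂)`, realized on the subtype of
`L₂`) is an FSI-template, `L₁` is `K↾L₂`-closed, and its depth in `𝔱↾L₂` equals its
depth in `𝔱`. -/
theorem stmt3 {L : Type u} [LinearOrder L] (I : L → Set (Set L)) (K : L → Set L)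
    (hI : IsFSITemplate I) (hK : IsMemoryChoice I K)
    (L₁ L₂ : Set L) (h2 : KClosed K L₂) (h1 : KClosed K L₁) (hsub : L₁ ⊆ L₂) :
    IsFSITemplate (fun t : L₂ => {A : Set L₂ | Subtype.val '' A ∈ I ↑t}) ∧
    KClosed (fun t : L₂ => {s : L₂ | (s : L) ∈ K ↑t}) (Subtype.val ⁻¹' L₁) ∧
    (∀ ζ, DpLe (fun t : L₂ => {A : Set L₂ | Subtype.val '' A ∈ I ↑t})
        (fun t : L₂ => {s : L₂ | (s : L) ∈ K ↑t}) (Subtype.val ⁻¹' L₁) ζ ↔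
      DpLe I K L₁ ζ) := by
  refine ⟨?_, ?_, ?_⟩
  · intro t
    refine ⟨?_, ?_, ?_, ?_⟩
    · intro A hA s hs
      have := (hI ↑t).1 _ hA (Set.mem_image_of_mem _ hs)
      exact Subtype.coe_lt_coe.mp this
    · show Subtype.val '' (∅ : Set L₂) ∈ I ↑t
      rw [Set.image_empty]
      exact (hI ↑t).2.1
    · intro A hA B hB
      exact (hI ↑t).2.2.1 _ hA _ (Set.image_mono hB)
    · intro A hA B hB
      show Subtype.val '' (A ∪ B) ∈ I ↑t
      rw [Set.image_union]
      exact (hI ↑t).2.2.2 _ hA _ hB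
  · intro t ht s hs
    exact h1 ↑t ht hs
  · intro ζ
    constructor
    · intro h
      have := dp_backward I K hI L₂ h2 _ ζ h
      rwa [Subtype.image_preimage_coe, Set.inter_eq_self_of_subset_right hsub] at this
    · intro h
      exact dp_forward I K L₂ L₁ ζ h hsub
end

section
/- If (t, K) is a smooth FSI-template (i.e. Dp(L, K) < ∞) then: (a) for every t ∈ L and A ∈ I_t there is a K-closed B ∈ I_t with A ⊆ B; and (b) if s ∈ L₁ ∈ I_t and L₂ ∈ I_s then L₁ ∪ L₂ ∈ I_t. -/
universe u

/-- `(𝔱, K)` is smooth: the depth of the whole order is an ordinal (`< ∞`). -/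
def SmoothT {L : Type u} [LinearOrder L] (I : L → Set (Set L)) (K : L → Set L) : Prop :=
  ∃ ζ, DpLe I K Set.univ ζ

lemma dpLe_key {L : Type u} [LinearOrder L] {I : L → Set (Set L)} {K : L → Set L}
    (hI : IsFSITemplate I) {S : Set L} {ζ : Ordinal.{u}} (h : DpLe I K S ζ) :
    (∀ t ∈ S, ∀ A ∈ I t, A ⊆ S → ∃ B ∈ I t, KClosed K B ∧ A ⊆ B ∧ B ⊆ S) ∧
    (∀ t ∈ S, ∀ L₁ ∈ I t, L₁ ⊆ S → ∀ s ∈ L₁, ∀ L₂ ∈ I s, L₂ ⊆ S → L₁ ∪ L₂ ∈ I t) := by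
  induction h with
  | zero =>
    exact ⟨fun t ht => absurd ht (Set.notMem_empty t),
      fun t ht => absurd ht (Set.notMem_empty t)⟩
  | succ S ζ Lstar hsub hsing hdisj hcl hmem hdp ih =>
    constructor
    · intro t ht A hA hAS
      have hAL : A ∩ Lstar = ∅ := hdisj t ht A hA
      have hAS' : A ⊆ S \ Lstar := fun x hx =>
        ⟨hAS hx, fun hxL => Set.eq_empty_iff_forall_notMem.mp hAL x ⟨hx, hxL⟩⟩
      by_cases htL : t ∈ Lstar
      · exact ⟨S \ Lstar, hmem t htL, hcl, hAS', Set.diff_subset⟩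
      · obtain ⟨B, hB, hBcl, hAB, hBS⟩ := ih.1 t ⟨ht, htL⟩ A hA hAS'
        exact ⟨B, hB, hBcl, hAB, hBS.trans Set.diff_subset⟩
    · intro t ht L₁ hL₁ hL₁S s hs L₂ hL₂ hL₂S
      have h1 : L₁ ⊆ S \ Lstar := by
        have hd := hdisj t ht L₁ hL₁
        exact fun x hx =>
          ⟨hL₁S hx, fun hxL => Set.eq_empty_iff_forall_notMem.mp hd x ⟨hx, hxL⟩⟩
      have hsS : s ∈ S := hL₁S hs
      have h2 : L₂ ⊆ S \ Lstar := by
        have hd := hdisj s hsS L₂ hL₂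
        exact fun x hx =>
          ⟨hL₂S hx, fun hxL => Set.eq_empty_iff_forall_notMem.mp hd x ⟨hx, hxL⟩⟩
      by_cases htL : t ∈ Lstar
      · exact (hI t).2.2.1 (S \ Lstar) (hmem t htL) _ (Set.union_subset h1 h2)
      · exact ih.2 t ⟨ht, htL⟩ L₁ hL₁ h1 s hs L₂ hL₂ h2
  | limit S ζ hζ 𝒜 hcl hsub hdir hU hcov d hd hdp ih =>
    constructor
    · intro t ht A hA hAS
      obtain ⟨B', hB', hAB'⟩ := hcov t ht A hA hAS
      obtain ⟨C, hC, htC⟩ : ∃ C ∈ 𝒜, t ∈ C := by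
        have ht' : t ∈ ⋃₀ 𝒜 := by rw [hU]; exact ht
        exact Set.mem_sUnion.mp ht'
      obtain ⟨D, hD, hBD, hCD⟩ := hdir B' hB' C hC
      obtain ⟨B, hB, hBcl, hAB, hBS⟩ := (ih D hD).1 t (hCD htC) A hA (hAB'.trans hBD)
      exact ⟨B, hB, hBcl, hAB, hBS.trans (hsub D hD)⟩
    · intro t ht L₁ hL₁ hL₁S s hs L₂ hL₂ hL₂S
      obtain ⟨B₁, hB₁, hL₁B⟩ := hcov t ht L₁ hL₁ hL₁S
      obtain ⟨B₂, hB₂, hL₂B⟩ := hcov s (hL₁S hs) L₂ hL₂ hL₂S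
      obtain ⟨C, hC, htC⟩ : ∃ C ∈ 𝒜, t ∈ C := by
        have ht' : t ∈ ⋃₀ 𝒜 := by rw [hU]; exact ht
        exact Set.mem_sUnion.mp ht'
      obtain ⟨D, hD, h1, h2⟩ := hdir B₁ hB₁ B₂ hB₂
      obtain ⟨E, hE, h3, h4⟩ := hdir D hD C hC
      exact (ih E hE).2 t (h4 htC) L₁ hL₁ (hL₁B.trans (h1.trans h3)) s hs L₂ hL₂
        (hL₂B.trans (h2.trans h3))

/-- For smooth `(𝔱,K)`: (a) every `A ∈ I t` is contained in a K-closed `B ∈ I t`;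
(b) if `s ∈ L₁ ∈ I t` and `L₂ ∈ I s` then `L₁ ∪ L₂ ∈ I t`. -/
theorem stmt4 {L : Type u} [LinearOrder L] (I : L → Set (Set L)) (K : L → Set L)
    (hI : IsFSITemplate I) (hK : IsMemoryChoice I K) (hsm : SmoothT I K) :
    (∀ t : L, ∀ A ∈ I t, ∃ B ∈ I t, KClosed K B ∧ A ⊆ B) ∧
    (∀ t s : L, ∀ L₁ ∈ I t, ∀ L₂ ∈ I s, s ∈ L₁ → L₁ ∪ L₂ ∈ I t) := by
  obtain ⟨ζ, hζ⟩ := hsm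
  have hkey := dpLe_key hI hζ
  constructor
  · intro t A hA
    obtain ⟨B, hB, hBcl, hAB, _⟩ := hkey.1 t (Set.mem_univ t) A hA (Set.subset_univ A)
    exact ⟨B, hB, hBcl, hAB⟩
  · intro t s L₁ hL₁ L₂ hL₂ hs
    exact hkey.2 t (Set.mem_univ t) L₁ hL₁ (Set.subset_univ _) s hs L₂ hL₂ (Set.subset_univ _)
end

section
/- Let J be a linear order and ⟨t_x : x ∈ J⟩ a family of smooth FSI-templates with pairwise disjoint underlying sets. Define t by: L^t = Σ_{x∈J} L^{t_x} (lexicographic-sum order), and for t ∈ L^{t_x}: I^t_t = {A ⊆ L^t : every member of A is < t, A ∩ L^{t_x} ∈ I^{t_x}_t, and {y <_J x : A ∩ L^{t_y} ≠ ∅} is finite}. Then t is a smooth FSI-template. -/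
universe u

/-- The ideals of the lexicographic-sum template `Σ_{x∈J} 𝔱_x`: for `t` in the `x`-th
summand, `A ∈ I_t` iff every member of `A` is `< t`, `A ∩ L^{𝔱_x} ∈ I^{𝔱_x}_t`, and `A`
meets only finitely many earlier summands. -/
def sigI {J : Type u} [LinearOrder J] {α : J → Type u} [∀ j, LinearOrder (α j)]
    (I : ∀ j, α j → Set (Set (α j))) : (Σₗ j, α j) → Set (Set (Σₗ j, α j)) := fun t =>
  {A | (∀ s ∈ A, s < t) ∧
    ((fun b : α (ofLex t).1 => toLex (⟨(ofLex t).1, b⟩ : Σ j, α j)) ⁻¹' A) ∈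
      I (ofLex t).1 (ofLex t).2 ∧
    {y : J | y < (ofLex t).1 ∧ ∃ b : α y, toLex (⟨y, b⟩ : Σ j, α j) ∈ A}.Finite}

section Aux

variable {L : Type u} [LinearOrder L] {I : L → Set (Set L)}

lemma trivKClosed (A : Set L) : KClosed (fun _ => (∅ : Set L)) A :=
  fun _ _ _ hs => absurd hs (Set.notMem_empty _)

/-- The limit rule with the ordinal witnesses packaged existentially. -/
lemma DpLe.limit' (S : Set L) (ζ : Ordinal.{u}) (hζ : Order.IsSuccLimit ζ) (𝒜 : Set (Set L))
    (hsub : ∀ A ∈ 𝒜, A ⊆ S) (hdir : DirectedOn (· ⊆ ·) 𝒜) (hU : ⋃₀ 𝒜 = S)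
    (hcov : ∀ t ∈ S, ∀ A ∈ I t, A ⊆ S → ∃ B ∈ 𝒜, A ⊆ B)
    (hd : ∀ A ∈ 𝒜, ∃ ξ, ξ < ζ ∧ DpLe I (fun _ => ∅) A ξ) :
    DpLe I (fun _ => ∅) S ζ := by
  classical
  choose! f hf1 hf2 using hd
  exact DpLe.limit S ζ hζ 𝒜 (fun A _ => trivKClosed A) hsub hdir hU hcov f hf1 hf2

/-- Depth bounds are monotone under passing to subsets (Lemma A). -/
lemma dpLe_subset (hI : IsFSITemplate I) {S : Set L} {ζ : Ordinal.{u}}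
    (h : DpLe I (fun _ => ∅) S ζ) : ∀ T ⊆ S, DpLe I (fun _ => ∅) T ζ := by
  induction h with
  | zero =>
    intro T hT
    rw [Set.subset_empty_iff.mp hT]
    exact DpLe.zero
  | succ S ζ Lstar hsub hsing hdisj hcl hmem h ih =>
    intro T hT
    have hTL : T \ (Lstar ∩ T) = T \ Lstar := by
      ext p; simp only [Set.mem_diff, Set.mem_inter_iff, not_and]; tauto
    refine DpLe.succ T ζ (Lstar ∩ T) Set.inter_subset_right
      (hsing.anti Set.inter_subset_left) ?_ (trivKClosed _) ?_ ?_
    · intro t ht A hA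
      have h0 := hdisj t (hT ht) A hA
      apply Set.eq_empty_of_subset_empty
      rw [← h0]
      exact Set.inter_subset_inter_right _ Set.inter_subset_left
    · intro t ht
      rw [hTL]
      exact (hI t).2.2.1 _ (hmem t ht.1) _ (Set.diff_subset_diff_left hT)
    · rw [hTL]
      exact ih _ (Set.diff_subset_diff_left hT)
  | limit S ζ hζ 𝒜 hcl hsub hdir hU hcov d hd h ih =>
    intro T hT
    refine DpLe.limit' T ζ hζ ((· ∩ T) '' 𝒜) ?_ ?_ ?_ ?_ ?_
    · rintro C ⟨A, hA, rfl⟩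
      exact Set.inter_subset_right
    · rintro C ⟨A, hA, rfl⟩ C' ⟨A', hA', rfl⟩
      obtain ⟨B, hB, h1, h2⟩ := hdir A hA A' hA'
      exact ⟨B ∩ T, ⟨B, hB, rfl⟩, Set.inter_subset_inter_left _ h1,
        Set.inter_subset_inter_left _ h2⟩
    · ext p
      simp only [Set.mem_sUnion, Set.mem_image]
      constructor
      · rintro ⟨C, ⟨A, hA, rfl⟩, hp⟩
        exact hp.2
      · intro hp
        have hpS : p ∈ S := hT hp
        rw [← hU] at hpS
        obtain ⟨A, hA, hpA⟩ := hpS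
        exact ⟨A ∩ T, ⟨A, hA, rfl⟩, hpA, hp⟩
    · intro t ht A hA hAT
      obtain ⟨B, hB, hAB⟩ := hcov t (hT ht) A hA (hAT.trans hT)
      exact ⟨B ∩ T, ⟨B, hB, rfl⟩, Set.subset_inter hAB hAT⟩
    · rintro C ⟨A, hA, rfl⟩
      exact ⟨d A, hd A hA, ih A hA _ Set.inter_subset_left⟩

/-- The sum lemma (Lemma B): if `S₂` lies entirely "above" `S₁` (no ideal set at a point
of `S₁` meets `S₂`, and `S₁` belongs to every ideal at a point of `S₂`), depths add. -/
lemma dpLe_union (hI : IsFSITemplate I) {S₂ : Set L} {β₂ : Ordinal.{u}}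
    (h₂ : DpLe I (fun _ => ∅) S₂ β₂) :
    ∀ (S₁ : Set L) (β₁ : Ordinal.{u}), DpLe I (fun _ => ∅) S₁ β₁ →
      (∀ t ∈ S₁, ∀ A ∈ I t, A ∩ S₂ = ∅) → (∀ t ∈ S₂, S₁ ∈ I t) → S₁ ∩ S₂ = ∅ →
      DpLe I (fun _ => ∅) (S₁ ∪ S₂) (β₁ + β₂) := by
  induction h₂ with
  | zero =>
    intro S₁ β₁ h₁ _ _ _
    rw [Set.union_empty, add_zero]
    exact h₁
  | succ S₂ ζ Lstar hsub hsing hdisj hcl hmem h ih =>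
    intro S₁ β₁ h₁ hi hii hd12
    have h1l : ∀ p ∈ S₁, p ∉ Lstar := fun p hp hl =>
      Set.eq_empty_iff_forall_notMem.mp hd12 p ⟨hp, hsub hl⟩
    have key : (S₁ ∪ S₂) \ Lstar = S₁ ∪ S₂ \ Lstar := by
      ext p
      simp only [Set.mem_diff, Set.mem_union]
      constructor
      · rintro ⟨hp | hp, hn⟩
        · exact Or.inl hp
        · exact Or.inr ⟨hp, hn⟩
      · rintro (hp | ⟨hp, hn⟩)
        · exact ⟨Or.inl hp, h1l p hp⟩
        · exact ⟨Or.inr hp, hn⟩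
    have hrw : β₁ + (ζ + 1) = (β₁ + ζ) + 1 := (add_assoc β₁ ζ 1).symm
    rw [hrw]
    refine DpLe.succ (S₁ ∪ S₂) (β₁ + ζ) Lstar (hsub.trans Set.subset_union_right) hsing
      ?_ (trivKClosed _) ?_ ?_
    · intro t ht A hA
      rcases ht with ht | ht
      · apply Set.eq_empty_of_subset_empty
        rw [← hi t ht A hA]
        exact Set.inter_subset_inter_right _ hsub
      · exact hdisj t ht A hA
    · intro t ht
      rw [key]
      exact (hI t).2.2.2 _ (hii t (hsub ht)) _ (hmem t ht)
    · rw [key]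
      refine ih S₁ β₁ h₁ ?_ ?_ ?_
      · intro t ht A hA
        apply Set.eq_empty_of_subset_empty
        rw [← hi t ht A hA]
        exact Set.inter_subset_inter_right _ Set.diff_subset
      · exact fun t ht => hii t ht.1
      · apply Set.eq_empty_of_subset_empty
        rw [← hd12]
        exact Set.inter_subset_inter_right _ Set.diff_subset
  | limit S₂ ζ hζ 𝒜 hcl hsub hdir hU hcov d hd h ih =>
    intro S₁ β₁ h₁ hi hii hd12
    refine DpLe.limit' (S₁ ∪ S₂) (β₁ + ζ) (Ordinal.isSuccLimit_add β₁ hζ)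
      (insert S₁ ((S₁ ∪ ·) '' 𝒜)) ?_ ?_ ?_ ?_ ?_
    · rintro C (rfl | ⟨A, hA, rfl⟩)
      · exact Set.subset_union_left
      · exact Set.union_subset_union_right _ (hsub A hA)
    · have hmono : ∀ C ∈ insert S₁ ((S₁ ∪ ·) '' 𝒜), C = S₁ ∨ ∃ A ∈ 𝒜, C = S₁ ∪ A := by
        intro C hC
        rcases Set.mem_insert_iff.mp hC with h' | ⟨A, hA, h'⟩
        · exact Or.inl h'
        · exact Or.inr ⟨A, hA, h'.symm⟩
      intro C hC C' hC'
      rcases hmono C hC with hC1 | ⟨A, hA, hC1⟩ <;>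
        rcases hmono C' hC' with hC2 | ⟨A', hA', hC2⟩
      · exact ⟨S₁, Set.mem_insert _ _, hC1.le, hC2.le⟩
      · exact ⟨S₁ ∪ A', Set.mem_insert_iff.mpr (Or.inr ⟨A', hA', rfl⟩),
          by rw [hC1]; exact Set.subset_union_left, hC2.le⟩
      · exact ⟨S₁ ∪ A, Set.mem_insert_iff.mpr (Or.inr ⟨A, hA, rfl⟩), hC1.le,
          by rw [hC2]; exact Set.subset_union_left⟩
      · obtain ⟨B, hB, h1, h2⟩ := hdir A hA A' hA'
        exact ⟨S₁ ∪ B, Set.mem_insert_iff.mpr (Or.inr ⟨B, hB, rfl⟩),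
          by rw [hC1]; exact Set.union_subset_union_right _ h1,
          by rw [hC2]; exact Set.union_subset_union_right _ h2⟩
    · ext p
      simp only [Set.sUnion_insert, Set.mem_union, Set.mem_sUnion, Set.mem_image]
      constructor
      · rintro (hp | ⟨C, ⟨A, hA, rfl⟩, hp⟩)
        · exact Or.inl hp
        · rcases hp with hp | hp
          · exact Or.inl hp
          · exact Or.inr (hU ▸ (⟨A, hA, hp⟩ : p ∈ ⋃₀ 𝒜))
      · rintro (hp | hp)
        · exact Or.inl hp
        · rw [← hU] at hp
          obtain ⟨A, hA, hpA⟩ := hp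
          exact Or.inr ⟨S₁ ∪ A, ⟨A, hA, rfl⟩, Or.inr hpA⟩
    · intro t ht A hA hAsub
      rcases ht with ht | ht
      · refine ⟨S₁, Set.mem_insert _ _, ?_⟩
        intro p hp
        rcases hAsub hp with h' | h'
        · exact h'
        · exfalso
          have hq : p ∈ A ∩ S₂ := ⟨hp, h'⟩
          rw [hi t ht A hA] at hq
          exact hq
      · have hAS2 : A ∩ S₂ ∈ I t := (hI t).2.2.1 A hA _ Set.inter_subset_left
        obtain ⟨B, hB, hAB⟩ := hcov t ht _ hAS2 Set.inter_subset_right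
        refine ⟨S₁ ∪ B, Set.mem_insert_iff.mpr (Or.inr ⟨B, hB, rfl⟩), ?_⟩
        intro p hp
        rcases hAsub hp with h' | h'
        · exact Or.inl h'
        · exact Or.inr (hAB ⟨hp, h'⟩)
    · rintro C (rfl | ⟨A, hA, rfl⟩)
      · exact ⟨β₁, (by simpa using (add_lt_add_iff_left β₁).mpr hζ.pos), h₁⟩
      · refine ⟨β₁ + d A, (add_lt_add_iff_left β₁).mpr (hd A hA), ?_⟩
        refine ih A hA S₁ β₁ h₁ ?_ ?_ ?_
        · intro t ht A' hA'
          apply Set.eq_empty_of_subset_empty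
          rw [← hi t ht A' hA']
          exact Set.inter_subset_inter_right _ (hsub A hA)
        · exact fun t ht => hii t (hsub A hA ht)
        · apply Set.eq_empty_of_subset_empty
          rw [← hd12]
          exact Set.inter_subset_inter_right _ (hsub A hA)

end Aux

section Sigma

variable {J : Type u} [LinearOrder J] {α : J → Type u} [∀ j, LinearOrder (α j)]

lemma exists_mk (p : Σₗ j, α j) : ∃ (y : J) (b : α y), p = toLex ⟨y, b⟩ :=
  ⟨(ofLex p).1, (ofLex p).2, rfl⟩

lemma sig_inj (x : J) : Function.Injective (fun b : α x => toLex (⟨x, b⟩ : Σ j, α j)) := by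
  intro b b' h
  have h' : (⟨x, b⟩ : Σ j, α j) = ⟨x, b'⟩ := h
  rw [Sigma.mk.inj_iff] at h'
  exact eq_of_heq h'.2

lemma sig_lt_same {x : J} {b b' : α x} (h : b < b') :
    toLex (⟨x, b⟩ : Σ j, α j) < toLex ⟨x, b'⟩ :=
  Sigma.Lex.lt_def.mpr (Or.inr ⟨rfl, h⟩)

lemma sig_lt_left {y x : J} (h : y < x) (b : α y) (c : α x) :
    toLex (⟨y, b⟩ : Σ j, α j) < toLex ⟨x, c⟩ :=
  Sigma.Lex.lt_def.mpr (Or.inl h)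

lemma sig_lt_index_le {y x : J} {b : α y} {c : α x}
    (h : toLex (⟨y, b⟩ : Σ j, α j) < toLex ⟨x, c⟩) : y ≤ x := by
  rcases Sigma.Lex.lt_def.mp h with h' | ⟨h', _⟩
  · exact le_of_lt h'
  · exact le_of_eq h'

variable {I : ∀ j, α j → Set (Set (α j))}

/-- Transfer lemma: depth in a summand transfers to its copy in the lexicographic sum. -/
lemma dpLe_image (htemp : ∀ j, IsFSITemplate (I j)) (x : J)
    {C₀ : Set (α x)} {ζ : Ordinal.{u}} (h : DpLe (I x) (fun _ => ∅) C₀ ζ) :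
    DpLe (sigI I) (fun _ => ∅)
      ((fun b : α x => toLex (⟨x, b⟩ : Σ j, α j)) '' C₀) ζ := by
  set σ : α x → (Σₗ j, α j) := fun b => toLex (⟨x, b⟩ : Σ j, α j) with hσ
  have hinj : Function.Injective σ := sig_inj x
  induction h with
  | zero =>
    rw [Set.image_empty]
    exact DpLe.zero
  | succ C₀ ζ Lstar hsub hsing hdisj hcl hmem h ih =>
    have himg : σ '' C₀ \ σ '' Lstar = σ '' (C₀ \ Lstar) := (Set.image_diff hinj _ _).symm
    refine DpLe.succ _ ζ (σ '' Lstar) (Set.image_mono hsub)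
      (hsing.image σ) ?_ (trivKClosed _) ?_ ?_
    · rintro t ⟨t₀, ht₀, rfl⟩ A hA
      apply Set.eq_empty_iff_forall_notMem.mpr
      rintro p ⟨hpA, b, hb, rfl⟩
      have h2 : (σ ⁻¹' A) ∈ I x t₀ := hA.2.1
      have h3 := hdisj t₀ ht₀ _ h2
      have : b ∈ (σ ⁻¹' A) ∩ Lstar := ⟨hpA, hb⟩
      rw [h3] at this
      exact this
    · rintro t ⟨t₀, ht₀, rfl⟩
      rw [himg]
      refine ⟨?_, ?_, ?_⟩
      · rintro s ⟨b, hb, rfl⟩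
        exact sig_lt_same ((htemp x t₀).1 _ (hmem t₀ ht₀) hb)
      · show σ ⁻¹' (σ '' (C₀ \ Lstar)) ∈ I x t₀
        rw [Set.preimage_image_eq _ hinj]
        exact hmem t₀ ht₀
      · apply Set.Finite.subset Set.finite_empty
        rintro y ⟨hy, b, b', _, heq⟩
        have : x = y := congrArg (fun q => (ofLex q).1) heq
        exact absurd hy (by rw [← this]; exact lt_irrefl x)
    · rw [himg]
      exact ih
  | limit C₀ ζ hζ 𝒜 hcl hsub hdir hU hcov d hd h ih =>
    refine DpLe.limit' _ ζ hζ ((σ '' ·) '' 𝒜) ?_ ?_ ?_ ?_ ?_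
    · rintro C ⟨A, hA, rfl⟩
      exact Set.image_mono (hsub A hA)
    · rintro C ⟨A, hA, rfl⟩ C' ⟨A', hA', rfl⟩
      obtain ⟨B, hB, h1, h2⟩ := hdir A hA A' hA'
      exact ⟨σ '' B, ⟨B, hB, rfl⟩, Set.image_mono h1, Set.image_mono h2⟩
    · rw [← hU, ← Set.image_sUnion]
    · rintro t ⟨t₀, ht₀, rfl⟩ A hA hAsub
      have hA0 : σ ⁻¹' A ∈ I x t₀ := hA.2.1
      have hA0sub : σ ⁻¹' A ⊆ C₀ := by
        intro b hb
        obtain ⟨b', hb', heq⟩ := hAsub hb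
        rwa [← hinj heq]
      obtain ⟨B, hB, hAB⟩ := hcov t₀ ht₀ _ hA0 hA0sub
      refine ⟨σ '' B, ⟨B, hB, rfl⟩, ?_⟩
      have hArng : A = σ '' (σ ⁻¹' A) :=
        (Set.image_preimage_eq_of_subset
          ((hAsub.trans (Set.image_subset_range _ _)))).symm
      rw [hArng]
      exact Set.image_mono hAB
    · rintro C ⟨A, hA, rfl⟩
      exact ⟨d A, hd A hA, ih A hA⟩

end Sigma

section Main

variable {J : Type u} [LinearOrder J] {α : J → Type u} [∀ j, LinearOrder (α j)]
variable {I : ∀ j, α j → Set (Set (α j))}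

/-- Sets meeting only finitely many summands have depth at most `(⨆ ζf) * n` (Lemma C). -/
lemma depth_finsupp (htemp : ∀ j, IsFSITemplate (I j)) (hsig : IsFSITemplate (sigI I))
    (ζf : J → Ordinal.{u}) (hζf : ∀ j, DpLe (I j) (fun _ => ∅) Set.univ (ζf j)) :
    ∀ (n : ℕ) (F : Finset J) (B : Set (Σₗ j, α j)), F.card = n →
      (∀ p ∈ B, (ofLex p).1 ∈ F) →
      ∃ ξ, ξ ≤ (⨆ j, ζf j) * n ∧ DpLe (sigI I) (fun _ => ∅) B ξ := by
  intro n
  induction n with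
  | zero =>
    intro F B hF hsupp
    have hB : B = ∅ := by
      rw [Finset.card_eq_zero] at hF
      subst hF
      exact Set.eq_empty_iff_forall_notMem.mpr
        (fun p hp => absurd (hsupp p hp) (Finset.notMem_empty _))
    exact ⟨0, zero_le, by rw [hB]; exact DpLe.zero⟩
  | succ n ih =>
    intro F B hF hsupp
    have hne : F.Nonempty := Finset.card_pos.mp (by omega)
    set x := F.max' hne with hx
    set σ : α x → (Σₗ j, α j) := fun b => toLex (⟨x, b⟩ : Σ j, α j) with hσ
    set C₀ : Set (α x) := {b : α x | toLex (⟨x, b⟩ : Σ j, α j) ∈ B} with hC₀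
    set S₁ : Set (Σₗ j, α j) := {p ∈ B | (ofLex p).1 ≠ x} with hS₁
    have hlt : ∀ y ∈ F, y ≠ x → y < x := fun y hy hne' => lt_of_le_of_ne (F.le_max' y hy) hne'
    have hsplit : B = S₁ ∪ σ '' C₀ := by
      ext p
      constructor
      · intro hp
        obtain ⟨y, b, rfl⟩ := exists_mk p
        by_cases h' : y = x
        · subst h'
          exact Or.inr ⟨b, hp, rfl⟩
        · exact Or.inl ⟨hp, h'⟩
      · rintro (hp | ⟨b, hb, rfl⟩)
        · exact hp.1
        · exact hb
    obtain ⟨ξ₁, hξ₁, hD₁⟩ := ih (F.erase x) S₁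
      (by rw [Finset.card_erase_of_mem (F.max'_mem hne), hF]; omega)
      (fun p hp => Finset.mem_erase.mpr ⟨hp.2, hsupp p hp.1⟩)
    have hD₂ : DpLe (sigI I) (fun _ => ∅) (σ '' C₀) (ζf x) :=
      dpLe_image htemp x (dpLe_subset (htemp x) (hζf x) C₀ (Set.subset_univ _))
    have hmain : DpLe (sigI I) (fun _ => ∅) (S₁ ∪ σ '' C₀) (ξ₁ + ζf x) := by
      refine dpLe_union hsig hD₂ S₁ ξ₁ hD₁ ?_ ?_ ?_
      · intro t ht A hA
        obtain ⟨y, c, rfl⟩ := exists_mk t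
        have hyx : y < x := hlt y (hsupp _ ht.1) ht.2
        apply Set.eq_empty_iff_forall_notMem.mpr
        rintro p ⟨hpA, b, hb, rfl⟩
        exact absurd (sig_lt_index_le (hA.1 _ hpA)) (not_le.mpr hyx)
      · rintro t ⟨t₀, ht₀, rfl⟩
        refine ⟨?_, ?_, ?_⟩
        · intro s hs
          obtain ⟨y, b, rfl⟩ := exists_mk s
          exact sig_lt_left (hlt y (hsupp _ hs.1) hs.2) b t₀
        · show σ ⁻¹' S₁ ∈ I x t₀
          have hpre : σ ⁻¹' S₁ = ∅ :=
            Set.eq_empty_iff_forall_notMem.mpr (fun b hb => hb.2 rfl)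
          rw [hpre]
          exact (htemp x t₀).2.1
        · apply Set.Finite.subset F.finite_toSet
          rintro y ⟨hy, b, hb⟩
          exact hsupp _ hb.1
      · apply Set.eq_empty_iff_forall_notMem.mpr
        rintro p ⟨hp1, b, hb, rfl⟩
        exact hp1.2 rfl
    refine ⟨ξ₁ + ζf x, ?_, hsplit ▸ hmain⟩
    calc ξ₁ + ζf x ≤ (⨆ j, ζf j) * n + (⨆ j, ζf j) :=
          add_le_add hξ₁ (le_ciSup (Ordinal.bddAbove_range _) x)
      _ = (⨆ j, ζf j) * ((n : Ordinal) + 1) := (mul_add_one _ _).symm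
      _ = (⨆ j, ζf j) * (↑(n + 1) : ℕ) := by rw [Nat.cast_succ]

end Main

/-- The lexicographic sum along a linear order `J` of smooth FSI-templates (with pairwise
disjoint underlying sets) is a smooth FSI-template (trivial memory choice). -/
theorem stmt10 {J : Type u} [LinearOrder J] {α : J → Type u} [∀ j, LinearOrder (α j)]
    (I : ∀ j, α j → Set (Set (α j)))
    (htemp : ∀ j, IsFSITemplate (I j))
    (hsm : ∀ j, ∃ ζ, DpLe (I j) (fun _ => ∅) Set.univ ζ) :
    IsFSITemplate (sigI I) ∧
    ∃ ζ, DpLe (sigI I) (fun _ => ∅) Set.univ ζ := by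
  classical
  have hsig : IsFSITemplate (sigI I) := by
    intro t
    refine ⟨fun A hA => hA.1, ⟨fun s hs => absurd hs (Set.notMem_empty _), ?_, ?_⟩, ?_, ?_⟩
    · rw [Set.preimage_empty]
      exact (htemp _ _).2.1
    · apply Set.Finite.subset Set.finite_empty
      rintro y ⟨hy, b, hb⟩
      exact absurd hb (Set.notMem_empty _)
    · intro A hA B hB
      refine ⟨fun s hs => hA.1 s (hB hs),
        (htemp _ _).2.2.1 _ hA.2.1 _ (Set.preimage_mono hB), ?_⟩
      apply hA.2.2.subset
      rintro y ⟨hy, b, hb⟩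
      exact ⟨hy, b, hB hb⟩
    · intro A hA B hB
      refine ⟨?_, ?_, ?_⟩
      · intro s hs
        rcases hs with hs | hs
        · exact hA.1 s hs
        · exact hB.1 s hs
      · rw [Set.preimage_union]
        exact (htemp _ _).2.2.2 _ hA.2.1 _ hB.2.1
      · apply (hA.2.2.union hB.2.2).subset
        rintro y ⟨hy, b, hb⟩
        rcases hb with hb | hb
        · exact Or.inl ⟨hy, b, hb⟩
        · exact Or.inr ⟨hy, b, hb⟩
  refine ⟨hsig, ?_⟩
  choose ζf hζf using hsm
  set ζs : Ordinal.{u} := ⨆ j, ζf j with hζs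
  have hpos : (0 : Ordinal.{u}) < ζs + 1 := by
    rw [Ordinal.add_one_eq_succ]
    exact Ordinal.succ_pos ζs
  have hlim : Order.IsSuccLimit ((ζs + 1) * Ordinal.omega0.{u}) :=
    Ordinal.isSuccLimit_mul_right hpos Ordinal.isSuccLimit_omega0
  refine ⟨(ζs + 1) * Ordinal.omega0,
    DpLe.limit' Set.univ _ hlim
      {B | {y : J | ∃ b : α y, toLex (⟨y, b⟩ : Σ j, α j) ∈ B}.Finite}
      (fun B _ => Set.subset_univ B) ?_ ?_ ?_ ?_⟩
  · intro B hB B' hB'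
    refine ⟨B ∪ B', ?_, Set.subset_union_left, Set.subset_union_right⟩
    apply (hB.union hB').subset
    rintro y ⟨b, hb | hb⟩
    · exact Or.inl ⟨b, hb⟩
    · exact Or.inr ⟨b, hb⟩
  · apply Set.eq_univ_of_forall
    intro p
    refine ⟨{p}, ?_, rfl⟩
    apply Set.Finite.subset (Set.finite_singleton (ofLex p).1)
    rintro y ⟨b, hb⟩
    rw [Set.mem_singleton_iff] at hb ⊢
    exact congrArg (fun q => (ofLex q).1) hb
  · intro t _ A hA _
    refine ⟨A, ?_, subset_rfl⟩
    obtain ⟨x, t₀, rfl⟩ := exists_mk t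
    apply Set.Finite.subset (hA.2.2.union (Set.finite_singleton x))
    rintro y ⟨b, hb⟩
    rcases lt_or_eq_of_le (sig_lt_index_le (hA.1 _ hb)) with h' | h'
    · exact Or.inl ⟨h', b, hb⟩
    · exact Or.inr h'
  · intro B hB
    obtain ⟨ξ, hξ, hD⟩ := depth_finsupp htemp hsig ζf hζf hB.toFinset.card hB.toFinset B rfl
      (fun p hp => hB.mem_toFinset.mpr ⟨(ofLex p).2, hp⟩)
    refine ⟨ξ, ?_, hD⟩
    calc ξ ≤ ζs * hB.toFinset.card := hξ
      _ ≤ (ζs + 1) * hB.toFinset.card := mul_le_mul_left le_self_add _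
      _ < (ζs + 1) * Ordinal.omega0 :=
          mul_lt_mul_of_pos_left (Ordinal.nat_lt_omega0 _) hpos
end

section
/- Let λ be an uncountable regular cardinal, L₀⁺ a linear order isomorphic to λ, L₀⁻ its reverse (anti-isomorphic to λ) disjoint from it, and L₀ = L₀⁻ + L₀⁺. Define J on ^{ω>}(L₀) by: η <_J ν iff for some n, η↾n = ν↾n and either (|η| = n and ν(n) ∈ L₀⁺) or (|ν| = n and η(n) ∈ L₀⁻) or (|η| > n, |ν| > n and L₀ ⊨ η(n) < ν(n)). Then J is a linear order, and every nonempty open interval of J (as well as J itself) has cardinality λ. -/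
/-- `L₀ = L₀⁻ + L₀⁺`, where `L₀⁺` is a linear order isomorphic to `λ` (the canonical
well-order of type `λ`) and `L₀⁻` is its reverse, placed below it. -/
def L0 (lam : Cardinal.{0}) : Type := (lam.ord.ToType)ᵒᵈ ⊕ₗ lam.ord.ToType

noncomputable instance (lam : Cardinal.{0}) : LinearOrder (L0 lam) := by
  unfold L0; infer_instance

/-- The order `J` on the finite sequences `^{ω>}(L₀)`: `η <_J ν` iff for some `n`,
`η↾n = ν↾n` and either `η` ends at `n` and `ν(n) ∈ L₀⁺`, or `ν` ends at `n` and
`η(n) ∈ L₀⁻`, or both continue and `η(n) < ν(n)` in `L₀`. -/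
def JLT (lam : Cardinal.{0}) (η ν : List (L0 lam)) : Prop :=
  ∃ n : ℕ, η.take n = ν.take n ∧
    ((η.length = n ∧ ∃ h : n < ν.length, ∃ b, ofLex (ν.get ⟨n, h⟩) = Sum.inr b) ∨
     (ν.length = n ∧ ∃ h : n < η.length, ∃ b, ofLex (η.get ⟨n, h⟩) = Sum.inl b) ∨
     (∃ hη : n < η.length, ∃ hν : n < ν.length, η.get ⟨n, hη⟩ < ν.get ⟨n, hν⟩))

namespace Stmt18
variable {lam : Cardinal.{0}}

lemma jlt_nil_left_iff {ν : List (L0 lam)} :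
    JLT lam [] ν ↔ ∃ h : 0 < ν.length, ∃ b, ofLex (ν.get ⟨0, h⟩) = Sum.inr b := by
  constructor
  · rintro ⟨n, hta, ⟨hn, hh, b, hb⟩ | ⟨hn, hh, _⟩ | ⟨hh, _⟩⟩
    · simp only [List.length_nil] at hn; subst hn; exact ⟨hh, b, hb⟩
    · simp at hh
    · simp at hh
  · rintro ⟨h, b, hb⟩
    exact ⟨0, by simp, Or.inl ⟨rfl, h, b, hb⟩⟩

lemma jlt_nil_right_iff {η : List (L0 lam)} :
    JLT lam η [] ↔ ∃ h : 0 < η.length, ∃ b, ofLex (η.get ⟨0, h⟩) = Sum.inl b := by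
  constructor
  · rintro ⟨n, hta, ⟨_, hh, _⟩ | ⟨hn, hh, b, hb⟩ | ⟨_, hh, _⟩⟩
    · simp at hh
    · simp only [List.length_nil] at hn; subst hn; exact ⟨hh, b, hb⟩
    · simp at hh
  · rintro ⟨h, b, hb⟩
    exact ⟨0, by simp, Or.inr (Or.inl ⟨rfl, h, b, hb⟩)⟩

lemma jlt_cons_iff {x y : L0 lam} {s t : List (L0 lam)} :
    JLT lam (x :: s) (y :: t) ↔ x < y ∨ (x = y ∧ JLT lam s t) := by
  constructor
  · rintro ⟨n, hta, hcase⟩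
    cases n with
    | zero =>
      rcases hcase with ⟨hn, _⟩ | ⟨hn, _⟩ | ⟨h1, h2, hlt⟩
      · simp at hn
      · simp at hn
      · exact Or.inl hlt
    | succ k =>
      rw [List.take_succ_cons, List.take_succ_cons] at hta
      injection hta with hxy hta'
      subst hxy
      refine Or.inr ⟨rfl, k, hta', ?_⟩
      rcases hcase with ⟨hn, hh, b, hb⟩ | ⟨hn, hh, b, hb⟩ | ⟨h1, h2, hlt⟩
      · exact Or.inl ⟨Nat.succ_injective hn, Nat.succ_lt_succ_iff.mp hh, b, by simpa using hb⟩
      · exact Or.inr (Or.inl ⟨Nat.succ_injective hn, Nat.succ_lt_succ_iff.mp hh, b, by simpa using hb⟩)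
      · exact Or.inr (Or.inr ⟨Nat.succ_lt_succ_iff.mp h1, Nat.succ_lt_succ_iff.mp h2, by simpa using hlt⟩)
  · rintro (hlt | ⟨rfl, k, hta, hcase⟩)
    · exact ⟨0, by simp, Or.inr (Or.inr ⟨by simp, by simp, by simpa using hlt⟩)⟩
    · refine ⟨k + 1, by simpa using hta, ?_⟩
      rcases hcase with ⟨hn, hh, b, hb⟩ | ⟨hn, hh, b, hb⟩ | ⟨h1, h2, hlt⟩
      · exact Or.inl ⟨by simpa using hn, Nat.succ_lt_succ hh, b, by simpa using hb⟩
      · exact Or.inr (Or.inl ⟨by simpa using hn, Nat.succ_lt_succ hh, b, by simpa using hb⟩)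
      · exact Or.inr (Or.inr ⟨Nat.succ_lt_succ h1, Nat.succ_lt_succ h2, by simpa using hlt⟩)


/-- constructors -/
def inlL (u : (lam.ord.ToType)ᵒᵈ) : L0 lam := toLex (Sum.inl u)
def inrL (b : lam.ord.ToType) : L0 lam := toLex (Sum.inr b)

@[simp] lemma ofLex_inlL (u) : ofLex (inlL (lam := lam) u) = Sum.inl u := rfl
@[simp] lemma ofLex_inrL (b) : ofLex (inrL (lam := lam) b) = Sum.inr b := rfl

lemma l0_cases (z : L0 lam) : (∃ a, ofLex z = Sum.inl a) ∨ (∃ b, ofLex z = Sum.inr b) := by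
  cases h : ofLex z with
  | inl a => exact Or.inl ⟨a, rfl⟩
  | inr b => exact Or.inr ⟨b, rfl⟩

lemma eq_toLex_of_ofLex {z : L0 lam} {w} (h : ofLex z = w) : z = toLex w := congrArg toLex h

lemma lt_of_inl_inr {x y : L0 lam} {a b} (hx : ofLex x = Sum.inl a) (hy : ofLex y = Sum.inr b) :
    x < y := by
  rw [eq_toLex_of_ofLex hx, eq_toLex_of_ofLex hy]
  exact Sum.Lex.inl_lt_inr _ _

lemma lt_inr_of_inr_lt {x y : L0 lam} {a b : lam.ord.ToType} (hx : ofLex x = Sum.inr a)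
    (hy : ofLex y = Sum.inr b) (h : a < b) : x < y := by
  rw [eq_toLex_of_ofLex hx, eq_toLex_of_ofLex hy]
  exact Sum.Lex.inr_lt_inr_iff.mpr h

lemma inl_of_lt_inl {x y : L0 lam} {b} (h : x < y) (hy : ofLex y = Sum.inl b) :
    ∃ a, ofLex x = Sum.inl a := by
  rcases l0_cases x with ⟨a, ha⟩ | ⟨a, ha⟩
  · exact ⟨a, ha⟩
  · rw [eq_toLex_of_ofLex ha, eq_toLex_of_ofLex hy] at h
    exact absurd (Sum.Lex.toLex_lt_toLex.mp h) (by exact Sum.lex_inr_inl)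

lemma inr_of_inr_lt {x y : L0 lam} {a} (h : x < y) (hx : ofLex x = Sum.inr a) :
    ∃ b, ofLex y = Sum.inr b := by
  rcases l0_cases y with ⟨b, hb⟩ | ⟨b, hb⟩
  · rw [eq_toLex_of_ofLex hx, eq_toLex_of_ofLex hb] at h
    exact absurd (Sum.Lex.toLex_lt_toLex.mp h) (by exact Sum.lex_inr_inl)
  · exact ⟨b, hb⟩

lemma jlt_irrefl : ∀ η : List (L0 lam), ¬ JLT lam η η := by
  intro η
  induction η with
  | nil => rw [jlt_nil_left_iff]; rintro ⟨h, -⟩; simp at h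
  | cons x s ih =>
    rw [jlt_cons_iff]
    rintro (h | ⟨-, h⟩)
    · exact lt_irrefl _ h
    · exact ih h

lemma jlt_trans : ∀ η ν ρ : List (L0 lam), JLT lam η ν → JLT lam ν ρ → JLT lam η ρ := by
  intro η
  induction η with
  | nil =>
    rintro (_ | ⟨q, tν⟩) ρ h1 h2
    · rcases jlt_nil_left_iff.mp h1 with ⟨h, -⟩; simp at h
    · obtain ⟨hlen, b, hb⟩ := jlt_nil_left_iff.mp h1
      rcases ρ with _ | ⟨r, tρ⟩
      · obtain ⟨hlen2, c, hc⟩ := jlt_nil_right_iff.mp h2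
        simp only [List.get] at hb hc
        rw [hb] at hc; exact absurd hc (by simp)
      · rcases jlt_cons_iff.mp h2 with hlt | ⟨rfl, -⟩
        · obtain ⟨c, hc⟩ := inr_of_inr_lt hlt (by simpa using hb)
          exact jlt_nil_left_iff.mpr ⟨by simp, c, by simpa using hc⟩
        · exact jlt_nil_left_iff.mpr ⟨by simp, b, by simpa using hb⟩
  | cons p tη ih =>
    rintro (_ | ⟨q, tν⟩) ρ h1 h2
    · obtain ⟨hlen2, c, hc⟩ := jlt_nil_right_iff.mp h1
      rcases ρ with _ | ⟨r, tρ⟩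
      · rcases jlt_nil_left_iff.mp h2 with ⟨h, -⟩; simp at h
      · obtain ⟨hlen, b, hb⟩ := jlt_nil_left_iff.mp h2
        exact jlt_cons_iff.mpr (Or.inl (lt_of_inl_inr (by simpa using hc) (by simpa using hb)))
    · rcases ρ with _ | ⟨r, tρ⟩
      · obtain ⟨hlen2, c, hc⟩ := jlt_nil_right_iff.mp h2
        rcases jlt_cons_iff.mp h1 with hlt | ⟨rfl, -⟩
        · obtain ⟨a, ha⟩ := inl_of_lt_inl hlt (by simpa using hc)
          exact jlt_nil_right_iff.mpr ⟨by simp, a, by simpa using ha⟩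
        · exact jlt_nil_right_iff.mpr ⟨by simp, c, by simpa using hc⟩
      · rcases jlt_cons_iff.mp h1 with hlt1 | ⟨rfl, h1'⟩ <;>
          rcases jlt_cons_iff.mp h2 with hlt2 | ⟨heq2, h2'⟩
        · exact jlt_cons_iff.mpr (Or.inl (lt_trans hlt1 hlt2))
        · exact jlt_cons_iff.mpr (Or.inl (heq2 ▸ hlt1))
        · exact jlt_cons_iff.mpr (Or.inl hlt2)
        · exact jlt_cons_iff.mpr (Or.inr ⟨heq2, ih _ _ h1' h2'⟩)

lemma jlt_total : ∀ η ν : List (L0 lam), JLT lam η ν ∨ η = ν ∨ JLT lam ν η := by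
  intro η
  induction η with
  | nil =>
    rintro (_ | ⟨q, tν⟩)
    · exact Or.inr (Or.inl rfl)
    · rcases l0_cases q with ⟨a, ha⟩ | ⟨b, hb⟩
      · exact Or.inr (Or.inr (jlt_nil_right_iff.mpr ⟨by simp, a, by simpa using ha⟩))
      · exact Or.inl (jlt_nil_left_iff.mpr ⟨by simp, b, by simpa using hb⟩)
  | cons p tη ih =>
    rintro (_ | ⟨q, tν⟩)
    · rcases l0_cases p with ⟨a, ha⟩ | ⟨b, hb⟩
      · exact Or.inl (jlt_nil_right_iff.mpr ⟨by simp, a, by simpa using ha⟩)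
      · exact Or.inr (Or.inr (jlt_nil_left_iff.mpr ⟨by simp, b, by simpa using hb⟩))
    · rcases lt_trichotomy p q with h | h | h
      · exact Or.inl (jlt_cons_iff.mpr (Or.inl h))
      · rcases ih tν with h' | h' | h'
        · exact Or.inl (jlt_cons_iff.mpr (Or.inr ⟨h, h'⟩))
        · exact Or.inr (Or.inl (by rw [h, h']))
        · exact Or.inr (Or.inr (jlt_cons_iff.mpr (Or.inr ⟨h.symm, h'⟩)))
      · exact Or.inr (Or.inr (jlt_cons_iff.mpr (Or.inl h)))


lemma jlt_append_iff (w s t : List (L0 lam)) : JLT lam (w ++ s) (w ++ t) ↔ JLT lam s t := by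
  induction w with
  | nil => simp
  | cons p w ih =>
    simp only [List.cons_append, jlt_cons_iff, lt_irrefl, false_or, true_and, ih]

/-- appending a sequence starting with an `L₀⁻` element preserves being below `b`. -/
lemma jlt_append_inl_left {x b : List (L0 lam)} (h : JLT lam x b) (u) (t : List (L0 lam)) :
    JLT lam (x ++ (inlL u :: t)) b := by
  induction x generalizing b with
  | nil =>
    rcases b with _ | ⟨q, tb⟩
    · rcases jlt_nil_left_iff.mp h with ⟨hh, -⟩; simp at hh
    · obtain ⟨hlen, c, hc⟩ := jlt_nil_left_iff.mp h
      exact jlt_cons_iff.mpr (Or.inl (lt_of_inl_inr (ofLex_inlL u) (by simpa using hc)))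
  | cons p xs ih =>
    rcases b with _ | ⟨q, tb⟩
    · obtain ⟨hlen, c, hc⟩ := jlt_nil_right_iff.mp h
      exact jlt_nil_right_iff.mpr ⟨by simp, c, by simpa using hc⟩
    · rcases jlt_cons_iff.mp h with hlt | ⟨rfl, h'⟩
      · exact jlt_cons_iff.mpr (Or.inl hlt)
      · exact jlt_cons_iff.mpr (Or.inr ⟨rfl, ih h'⟩)

/-- if `a < x` then either `a` stays below any extension of `x`, or `a` extends `x`
by an `L₀⁻` element. -/
lemma jlt_append_right_or {a x : List (L0 lam)} (h : JLT lam a x) (s : List (L0 lam)) :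
    JLT lam a (x ++ s) ∨ ∃ u t, a = x ++ (inlL u :: t) := by
  induction a generalizing x with
  | nil =>
    rcases x with _ | ⟨q, tx⟩
    · rcases jlt_nil_left_iff.mp h with ⟨hh, -⟩; simp at hh
    · obtain ⟨hlen, b, hb⟩ := jlt_nil_left_iff.mp h
      exact Or.inl (jlt_nil_left_iff.mpr ⟨by simp, b, by simpa using hb⟩)
  | cons p as ih =>
    rcases x with _ | ⟨q, tx⟩
    · obtain ⟨hlen, c, hc⟩ := jlt_nil_right_iff.mp h
      refine Or.inr ⟨c, as, ?_⟩
      simp only [List.nil_append]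
      have : p = inlL c := eq_toLex_of_ofLex (by simpa using hc)
      rw [this]
    · rcases jlt_cons_iff.mp h with hlt | ⟨rfl, h'⟩
      · exact Or.inl (jlt_cons_iff.mpr (Or.inl hlt))
      · rcases ih h' with h1 | ⟨u, t, rfl⟩
        · exact Or.inl (jlt_cons_iff.mpr (Or.inr ⟨rfl, h1⟩))
        · exact Or.inr ⟨u, t, rfl⟩


lemma mk_Tt : Cardinal.mk (lam.ord.ToType) = lam := by
  rw [Cardinal.mk_toType, Cardinal.card_ord]

lemma mk_L0 (hlam : Cardinal.aleph0 ≤ lam) : Cardinal.mk (L0 lam) = lam := by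
  have h : Cardinal.mk (L0 lam) = Cardinal.mk ((lam.ord.ToType)ᵒᵈ ⊕ lam.ord.ToType) := rfl
  have hd : Cardinal.mk ((lam.ord.ToType)ᵒᵈ) = lam := mk_Tt
  rw [h, Cardinal.mk_sum, Cardinal.lift_id, Cardinal.lift_id, hd, mk_Tt,
    Cardinal.add_eq_self hlam]

lemma mk_list (hlam : Cardinal.aleph0 ≤ lam) : Cardinal.mk (List (L0 lam)) = lam := by
  have h0 : Cardinal.mk (L0 lam) = lam := mk_L0 hlam
  have : Infinite (L0 lam) := Cardinal.infinite_iff.mpr (by rw [h0]; exact hlam)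
  rw [Cardinal.mk_list_eq_mk, h0]

lemma mk_Ioi (hlam : Cardinal.aleph0 ≤ lam) (δ : lam.ord.ToType) :
    Cardinal.mk (Set.Ioi δ) = lam := by
  have hle : Cardinal.mk (Set.Ioi δ) ≤ lam := le_trans (Cardinal.mk_set_le _) (le_of_eq mk_Tt)
  refine le_antisymm hle (le_of_not_gt fun hlt => ?_)
  have hiio : Cardinal.mk (Set.Iio δ) < lam := Cardinal.mk_Iio_ord_toType δ
  have hunion : (Set.Iio δ ∪ Set.Ioi δ ∪ {δ} : Set (lam.ord.ToType)) = Set.univ := by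
    ext z
    simp only [Set.mem_union, Set.mem_Iio, Set.mem_Ioi, Set.mem_singleton_iff,
      Set.mem_univ, iff_true]
    rcases lt_trichotomy z δ with h | h | h
    exacts [Or.inl (Or.inl h), Or.inr h, Or.inl (Or.inr h)]
  have hge : lam ≤ Cardinal.mk (Set.Iio δ ∪ Set.Ioi δ ∪ {δ} : Set (lam.ord.ToType)) := by
    rw [hunion, Cardinal.mk_univ, mk_Tt]
  have hsmall : Cardinal.mk (Set.Iio δ ∪ Set.Ioi δ ∪ {δ} : Set (lam.ord.ToType)) < lam := by
    refine lt_of_le_of_lt (Cardinal.mk_union_le _ _) (Cardinal.add_lt_of_lt hlam ?_ ?_)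
    · exact lt_of_le_of_lt (Cardinal.mk_union_le _ _) (Cardinal.add_lt_of_lt hlam hiio hlt)
    · exact lt_of_lt_of_le (by simpa using Cardinal.one_lt_aleph0) hlam
  exact absurd hge (not_le.mpr hsmall)

lemma inrL_injective : Function.Injective (inrL (lam := lam)) := by
  intro γ γ' h
  have := congrArg ofLex h
  simpa using this

lemma inlL_injective : Function.Injective (inlL (lam := lam)) := by
  intro γ γ' h
  have := congrArg ofLex h
  simpa using this

lemma interval_mk (hlam : Cardinal.aleph0 ≤ lam) {a b : List (L0 lam)}
    (hne : ∃ x, JLT lam a x ∧ JLT lam x b) :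
    Cardinal.mk {x | JLT lam a x ∧ JLT lam x b} = lam := by
  obtain ⟨x, hax, hxb⟩ := hne
  suffices hsuff : ∃ (S : Set (lam.ord.ToType)) (g : lam.ord.ToType → List (L0 lam)),
      Cardinal.mk S = lam ∧ Set.InjOn g S ∧
      ∀ γ ∈ S, JLT lam a (g γ) ∧ JLT lam (g γ) b by
    obtain ⟨S, g, hS, hinj, hmem⟩ := hsuff
    have hle : Cardinal.mk {x | JLT lam a x ∧ JLT lam x b} ≤ lam :=
      le_trans (Cardinal.mk_set_le _) (le_of_eq (mk_list hlam))
    refine le_antisymm hle ?_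
    have hinj2 := Cardinal.mk_le_of_injective
      (f := fun γ : S => (⟨g γ, hmem γ γ.2⟩ : {x | JLT lam a x ∧ JLT lam x b}))
      (fun γ γ' h => Subtype.ext (hinj γ.2 γ'.2 (congrArg Subtype.val h)))
    rwa [hS] at hinj2
  by_cases hc : ∃ u t, a = x ++ (inlL u :: t)
  · obtain ⟨u, t, rfl⟩ := hc
    have hbb : ∀ γ : lam.ord.ToType, JLT lam (x ++ [inlL u, inrL γ]) b := fun γ =>
      jlt_append_inl_left hxb u _
    have key : ∀ γ : lam.ord.ToType, JLT lam t [inrL γ] →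
        JLT lam (x ++ (inlL u :: t)) (x ++ [inlL u, inrL γ]) := by
      intro γ h
      have h2 := (jlt_append_iff (x ++ [inlL u]) t [inrL γ]).mpr h
      simpa [List.append_assoc] using h2
    have hS : ∃ S : Set (lam.ord.ToType), Cardinal.mk S = lam ∧
        ∀ γ ∈ S, JLT lam t [inrL γ] := by
      rcases t with _ | ⟨e, t'⟩
      · exact ⟨Set.univ, by rw [Cardinal.mk_univ]; exact mk_Tt,
          fun γ _ => jlt_nil_left_iff.mpr ⟨by simp, γ, rfl⟩⟩
      · rcases l0_cases e with ⟨v, hv⟩ | ⟨δ, hδ⟩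
        · exact ⟨Set.univ, by rw [Cardinal.mk_univ]; exact mk_Tt,
            fun γ _ => jlt_cons_iff.mpr (Or.inl (lt_of_inl_inr hv rfl))⟩
        · exact ⟨Set.Ioi δ, mk_Ioi hlam δ,
            fun γ hγ => jlt_cons_iff.mpr (Or.inl (lt_inr_of_inr_lt hδ rfl hγ))⟩
    obtain ⟨S, hSmk, hSmem⟩ := hS
    refine ⟨S, fun γ => x ++ [inlL u, inrL γ], hSmk, ?_,
      fun γ hγ => ⟨key γ (hSmem γ hγ), hbb γ⟩⟩
    intro γ _ γ' _ h
    have h1 := List.append_cancel_left h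
    have h2 : inrL γ = inrL γ' := by
      injection h1 with _ h3
      injection h3 with h4 _
    exact inrL_injective h2
  · refine ⟨Set.univ, fun γ => x ++ [inlL (OrderDual.toDual γ)],
      by rw [Cardinal.mk_univ]; exact mk_Tt, ?_, ?_⟩
    · intro γ _ γ' _ h
      have h1 := List.append_cancel_left h
      have h2 : inlL (lam := lam) (OrderDual.toDual γ) = inlL (OrderDual.toDual γ') := by
        injection h1 with h3 _
      exact OrderDual.toDual.injective (inlL_injective h2)
    · intro γ _
      constructor
      · rcases jlt_append_right_or hax [inlL (OrderDual.toDual γ)] with h | ⟨u, t, ht⟩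
        · exact h
        · exact absurd ⟨u, t, ht⟩ hc
      · exact jlt_append_inl_left hxb _ []

end Stmt18

/-- For `λ` regular uncountable, `J = ^{ω>}(L₀)` with the order above is a linear order,
and every nonempty open interval of `J`, as well as `J` itself, has cardinality `λ`. -/


theorem stmt18 (lam : Cardinal.{0}) (hreg : lam.IsRegular)
    (hunc : Cardinal.aleph0 < lam) :
    (∀ η, ¬ JLT lam η η) ∧
    (∀ η ν ρ, JLT lam η ν → JLT lam ν ρ → JLT lam η ρ) ∧
    (∀ η ν, JLT lam η ν ∨ η = ν ∨ JLT lam ν η) ∧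
    Cardinal.mk (List (L0 lam)) = lam ∧
    (∀ a b : List (L0 lam), JLT lam a b →
      (∃ x, JLT lam a x ∧ JLT lam x b) →
      Cardinal.mk {x | JLT lam a x ∧ JLT lam x b} = lam) := by
  have hlam : Cardinal.aleph0 ≤ lam := le_of_lt hunc
  exact ⟨Stmt18.jlt_irrefl, Stmt18.jlt_trans, Stmt18.jlt_total, Stmt18.mk_list hlam,
    fun a b _ hne => Stmt18.interval_mk hlam hne⟩
end

section
/- With J = ^{ω>}(L₀) ordered as above (L₀ = L₀⁻ + L₀⁺, λ regular uncountable): if θ is either 0 or 1 or an uncountable regular cardinal < λ, and ⟨t_i : i < θ⟩ is strictly decreasing in J, then the suborder {y ∈ J : ∀i < θ, y <_J t_i}, if nonempty, has cofinality λ. Moreover, the reverse order of J is isomorphic to J. -/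
open Cardinal Ordinal


variable {lam : Cardinal.{0}}

lemma get_of_take_eq {α : Type*} {a b : List α} {n m : ℕ} (h : a.take n = b.take n)
    (hmn : m < n) (ha : m < a.length) :
    ∃ hb : m < b.length, a.get ⟨m, ha⟩ = b.get ⟨m, hb⟩ := by
  have hlen : (a.take n).length = (b.take n).length := by rw [h]
  simp only [List.length_take] at hlen
  have hb : m < b.length := by omega
  refine ⟨hb, ?_⟩
  have h1 := List.getElem_of_eq h (i := m) (by simp; omega)
  simpa using h1

lemma ofLex_eq_inr {x : L0 lam} {c} : ofLex x = Sum.inr c ↔ x = toLex (Sum.inr c) := Iff.rfl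
lemma ofLex_eq_inl {x : L0 lam} {c} : ofLex x = Sum.inl c ↔ x = toLex (Sum.inl c) := Iff.rfl

lemma jlt_irrefl (a : List (L0 lam)) : ¬ JLT lam a a := by
  rintro ⟨n, -, (⟨h1, h2, -⟩ | ⟨h1, h2, -⟩ | ⟨h1, h2, hlt⟩)⟩
  · omega
  · omega
  · exact lt_irrefl _ hlt

lemma jlt_d3 {a b : List (L0 lam)} {n : ℕ} (h : a.take n = b.take n)
    (ha : n < a.length) (hb : n < b.length) (hlt : a.get ⟨n, ha⟩ < b.get ⟨n, hb⟩) :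
    JLT lam a b := ⟨n, h, Or.inr (Or.inr ⟨ha, hb, hlt⟩)⟩

lemma jlt_d1 {a b : List (L0 lam)} {n : ℕ} (h : a.take n = b.take n)
    (hl : a.length = n) (hb : n < b.length) (c) (hc : b.get ⟨n, hb⟩ = toLex (Sum.inr c)) :
    JLT lam a b := ⟨n, h, Or.inl ⟨hl, hb, c, hc⟩⟩

lemma jlt_d2 {a b : List (L0 lam)} {n : ℕ} (h : a.take n = b.take n)
    (hl : b.length = n) (ha : n < a.length) (c) (hc : a.get ⟨n, ha⟩ = toLex (Sum.inl c)) :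
    JLT lam a b := ⟨n, h, Or.inr (Or.inl ⟨hl, ha, c, hc⟩)⟩

lemma jlt_cons {a b : List (L0 lam)} (x : L0 lam) (h : JLT lam a b) :
    JLT lam (x :: a) (x :: b) := by
  obtain ⟨n, ht, hd⟩ := h
  refine ⟨n + 1, by simpa using ht, ?_⟩
  rcases hd with ⟨h1, h2, c, hc⟩ | ⟨h1, h2, c, hc⟩ | ⟨h1, h2, hlt⟩
  · exact Or.inl ⟨by simp [h1], by simp; omega, c, by simpa using hc⟩
  · exact Or.inr (Or.inl ⟨by simp [h1], by simp; omega, c, by simpa using hc⟩)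
  · exact Or.inr (Or.inr ⟨by simp; omega, by simp; omega, by simpa using hlt⟩)

lemma jlt_append {a b : List (L0 lam)} (p : List (L0 lam)) (h : JLT lam a b) :
    JLT lam (p ++ a) (p ++ b) := by
  induction p with
  | nil => simpa
  | cons x p ih => exact jlt_cons x ih

lemma L0.cases (x : L0 lam) : (∃ a, x = toLex (Sum.inl a)) ∨ ∃ b, x = toLex (Sum.inr b) := by
  rcases h : ofLex x with a | b
  · exact Or.inl ⟨a, by rw [← h]; rfl⟩
  · exact Or.inr ⟨b, by rw [← h]; rfl⟩

lemma L0.inl_lt_inl {a b : lam.ord.ToType} :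
    (toLex (Sum.inl a) : L0 lam) < toLex (Sum.inl b) ↔ b < a :=
  Sum.Lex.inl_lt_inl_iff

lemma L0.inl_lt_inr (a b : lam.ord.ToType) :
    (toLex (Sum.inl a) : L0 lam) < toLex (Sum.inr b) :=
  Sum.Lex.inl_lt_inr _ _

lemma L0.not_inr_lt_inl {a b : lam.ord.ToType} :
    ¬ (toLex (Sum.inr b) : L0 lam) < toLex (Sum.inl a) :=
  Sum.Lex.not_inr_lt_inl

lemma L0.inr_lt_inr {a b : lam.ord.ToType} :
    (toLex (Sum.inr a) : L0 lam) < toLex (Sum.inr b) ↔ a < b :=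
  Sum.Lex.inr_lt_inr_iff

lemma take_eq_of_take_eq {α : Type*} {l l' : List α} {n m : ℕ}
    (h : l.take n = l'.take n) (hm : m ≤ n) : l.take m = l'.take m := by
  have h1 : (l.take n).take m = (l'.take n).take m := by rw [h]
  simpa [List.take_take, Nat.min_eq_left hm] using h1

lemma jlt_trans {a b c : List (L0 lam)} (hab : JLT lam a b) (hbc : JLT lam b c) :
    JLT lam a c := by
  obtain ⟨n₁, t1, d1⟩ := hab
  obtain ⟨n₂, t2, d2⟩ := hbc
  rcases lt_trichotomy n₁ n₂ with hn | rfl | hn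
  · -- n₁ < n₂
    have tac : a.take n₁ = c.take n₁ := t1.trans (take_eq_of_take_eq t2 hn.le)
    rcases d1 with ⟨h1, h2, cc, hcc⟩ | ⟨h1, h2, cc, hcc⟩ | ⟨h1, h2, hlt⟩
    · obtain ⟨hc2, he⟩ := get_of_take_eq t2 hn h2
      exact jlt_d1 tac h1 hc2 cc (he ▸ (ofLex_eq_inr.1 hcc))
    · rcases d2 with ⟨g1, g2, -⟩ | ⟨g1, g2, -⟩ | ⟨g1, g2, -⟩ <;> omega
    · obtain ⟨hc2, he⟩ := get_of_take_eq t2 hn h2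
      exact jlt_d3 tac h1 hc2 (he ▸ hlt)
  · -- n₁ = n₂
    have tac : a.take n₁ = c.take n₁ := t1.trans t2
    rcases d1 with ⟨h1, h2, cc, hcc⟩ | ⟨h1, h2, cc, hcc⟩ | ⟨h1, h2, hlt⟩
    · rcases d2 with ⟨g1, g2, dd, hdd⟩ | ⟨g1, g2, dd, hdd⟩ | ⟨g1, g2, hlt2⟩
      · omega
      · rw [ofLex_eq_inr.1 hcc] at hdd; exact absurd hdd (by simp)
      · obtain ⟨ee, hee⟩ | ⟨ee, hee⟩ := L0.cases (c.get ⟨n₁, g2⟩)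
        · rw [show b.get ⟨n₁, g1⟩ = b.get ⟨n₁, h2⟩ from rfl, ofLex_eq_inr.1 hcc, hee] at hlt2
          exact absurd hlt2 L0.not_inr_lt_inl
        · exact jlt_d1 tac h1 g2 ee hee
    · rcases d2 with ⟨g1, g2, dd, hdd⟩ | ⟨g1, g2, dd, hdd⟩ | ⟨g1, g2, hlt2⟩
      · refine jlt_d3 tac h2 g2 ?_
        rw [ofLex_eq_inl.1 hcc, ofLex_eq_inr.1 hdd]
        exact L0.inl_lt_inr _ _
      · omega
      · omega
    · rcases d2 with ⟨g1, g2, dd, hdd⟩ | ⟨g1, g2, dd, hdd⟩ | ⟨g1, g2, hlt2⟩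
      · omega
      · obtain ⟨ee, hee⟩ | ⟨ee, hee⟩ := L0.cases (a.get ⟨n₁, h1⟩)
        · exact jlt_d2 tac g1 h1 ee hee
        · rw [hee, show b.get ⟨n₁, h2⟩ = b.get ⟨n₁, g2⟩ from rfl, ofLex_eq_inl.1 hdd] at hlt
          exact absurd hlt L0.not_inr_lt_inl
      · refine jlt_d3 tac h1 g2 (lt_trans hlt ?_)
        exact hlt2
  · -- n₂ < n₁
    have tac : a.take n₂ = c.take n₂ := (take_eq_of_take_eq t1 hn.le).trans t2
    rcases d2 with ⟨g1, g2, dd, hdd⟩ | ⟨g1, g2, dd, hdd⟩ | ⟨g1, g2, hlt2⟩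
    · rcases d1 with ⟨h1, h2, -⟩ | ⟨h1, h2, -⟩ | ⟨h1, h2, -⟩ <;> omega
    · obtain ⟨ha2, he⟩ := get_of_take_eq t1.symm hn g2
      exact jlt_d2 tac g1 ha2 dd (he ▸ (ofLex_eq_inl.1 hdd))
    · obtain ⟨ha2, he⟩ := get_of_take_eq t1.symm hn g1
      exact jlt_d3 tac ha2 g2 (he ▸ hlt2)

lemma jlt_asymm {a b : List (L0 lam)} (h1 : JLT lam a b) (h2 : JLT lam b a) : False :=
  jlt_irrefl a (jlt_trans h1 h2)

lemma jlt_total (a b : List (L0 lam)) : a = b ∨ JLT lam a b ∨ JLT lam b a := by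
  induction a generalizing b with
  | nil =>
    cases b with
    | nil => exact Or.inl rfl
    | cons y b =>
      obtain ⟨c, hc⟩ | ⟨c, hc⟩ := L0.cases y
      · exact Or.inr (Or.inr (jlt_d2 (by simp) rfl (by simp) c (by simp [hc]; rfl)))
      · exact Or.inr (Or.inl (jlt_d1 (by simp) rfl (by simp) c (by simp [hc]; rfl)))
  | cons x a ih =>
    cases b with
    | nil =>
      obtain ⟨c, hc⟩ | ⟨c, hc⟩ := L0.cases x
      · exact Or.inr (Or.inl (jlt_d2 (by simp) rfl (by simp) c (by simp [hc]; rfl)))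
      · exact Or.inr (Or.inr (jlt_d1 (by simp) rfl (by simp) c (by simp [hc]; rfl)))
    | cons y b =>
      rcases lt_trichotomy x y with hxy | rfl | hxy
      · exact Or.inr (Or.inl (jlt_d3 (n := 0) (by simp) (by simp) (by simp) (by simpa)))
      · rcases ih b with rfl | h | h
        · exact Or.inl rfl
        · exact Or.inr (Or.inl (jlt_cons x h))
        · exact Or.inr (Or.inr (jlt_cons x h))
      · exact Or.inr (Or.inr (jlt_d3 (n := 0) (by simp) (by simp) (by simp) (by simpa)))

lemma L0.inl_le_inl {a b : lam.ord.ToType} :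
    (toLex (Sum.inl a) : L0 lam) ≤ toLex (Sum.inl b) ↔ b ≤ a :=
  Sum.Lex.inl_le_inl_iff

lemma get_append_len {α : Type*} (p l : List α) (x : α) (h : p.length < (p ++ x :: l).length) :
    (p ++ x :: l).get ⟨p.length, h⟩ = x := by
  simp only [List.get_eq_getElem]
  rw [List.getElem_append_right (le_refl _)]
  simp

lemma take_append_len {α : Type*} (p l : List α) : (p ++ l).take p.length = p := by
  simp

abbrev inlL (a : lam.ord.ToType) : L0 lam := toLex (Sum.inl (OrderDual.toDual a))
abbrev inrL (b : lam.ord.ToType) : L0 lam := toLex (Sum.inr b)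

lemma inlL_lt_inlL {a b : lam.ord.ToType} : (inlL a : L0 lam) < inlL b ↔ b < a :=
  Sum.Lex.inl_lt_inl_iff
lemma inlL_lt_inrL (a b : lam.ord.ToType) : (inlL a : L0 lam) < inrL b :=
  Sum.Lex.inl_lt_inr _ _
lemma not_inrL_lt_inlL {a b : lam.ord.ToType} : ¬ (inrL b : L0 lam) < inlL a :=
  Sum.Lex.not_inr_lt_inl
lemma inrL_lt_inrL {a b : lam.ord.ToType} : (inrL a : L0 lam) < inrL b ↔ a < b :=
  Sum.Lex.inr_lt_inr_iff
lemma inlL_le_inlL {a b : lam.ord.ToType} : (inlL a : L0 lam) ≤ inlL b ↔ b ≤ a :=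
  Sum.Lex.inl_le_inl_iff

lemma L0.cases' (x : L0 lam) : (∃ a, x = inlL a) ∨ ∃ b, x = inrL b := L0.cases x

lemma jlt_nil_inr' (c : lam.ord.ToType) (l : List (L0 lam)) :
    JLT lam [] (inrL c :: l) :=
  jlt_d1 (n := 0) (by simp) rfl (by simp) c rfl

lemma jlt_snoc_inr (z : List (L0 lam)) (b : lam.ord.ToType) :
    JLT lam z (z ++ [inrL b]) := by
  simpa using jlt_append z (jlt_nil_inr' b [])

lemma jlt_snoc_inr_mono (z : List (L0 lam)) {b c : lam.ord.ToType} (h : b < c) :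
    JLT lam (z ++ [inrL b]) (z ++ [inrL c]) :=
  jlt_append z (jlt_d3 (n := 0) (by simp) (by simp) (by simp)
    (by simpa using inrL_lt_inrL.2 h))

/-- The key cofinality case analysis. -/
lemma cof_lemma {Y : Set (List (L0 lam))} {p : List (L0 lam)} {δ : lam.ord.ToType}
    (hmaxT : ∀ c : lam.ord.ToType, ∃ d, c < d)
    (hA1 : ∀ y ∈ Y, JLT lam y p)
    (hA2 : ∀ y ∈ Y, ∀ h : p.length < y.length, y.take p.length = p →
      y.get ⟨p.length, h⟩ ≤ inlL δ)
    (y : List (L0 lam)) (hy : y ∈ Y) :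
    y = p ++ [inlL δ] ∨ JLT lam y (p ++ [inlL δ]) ∨
      ∃ b, JLT lam y ((p ++ [inlL δ]) ++ [inrL b]) := by
  set z : List (L0 lam) := p ++ [inlL δ] with hz
  rcases jlt_total y z with h | h | h
  · exact Or.inl h
  · exact Or.inr (Or.inl h)
  obtain ⟨m, ht, hd⟩ := h
  have hzlen : z.length = p.length + 1 := by simp [hz]
  rcases hd with ⟨h1, h2, c, hc⟩ | ⟨h1, h2, c, hc⟩ | ⟨h2, h3, hlt⟩
  · -- z is a proper prefix of y, next coordinate inr c
    refine Or.inr (Or.inr ?_)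
    obtain ⟨b, hb⟩ := hmaxT c
    have hm : m = z.length := h1.symm
    subst hm
    have hty : y.take z.length = z := by simpa using ht.symm
    refine ⟨b, jlt_d3 (n := z.length) ?_ h2 (by simp) ?_⟩
    · rw [hty, take_append_len]
    · have h5 : (z ++ [inrL b]).get ⟨z.length, by simp⟩ = inrL b := by
        simpa using get_append_len z [] (inrL b) (by simp)
      rw [ofLex_eq_inr.1 hc, h5]
      exact inrL_lt_inrL.2 hb
  · -- y is a prefix of z
    exfalso
    have hm : m ≤ p.length := by omega
    have hztm : z.take m = p.take m := by
      rw [hz, List.take_append_of_le_length hm]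
    rcases eq_or_lt_of_le hm with hm' | hm'
    · -- m = p.length : y = p
      have hyp : y = p := by
        have h6 : y.take m = y := List.take_of_length_le (le_of_eq h1)
        rw [← h6, ← ht, hztm, hm', List.take_length]
      exact jlt_irrefl p (hyp ▸ hA1 y hy)
    · -- m < p.length
      have hzg : z.get ⟨m, h2⟩ = p.get ⟨m, hm'⟩ := by
        simp only [hz, List.get_eq_getElem]
        exact List.getElem_append_left hm'
      have hyt : p.take m = y.take m := hztm ▸ ht
      have hppy : JLT lam p y :=
        jlt_d2 hyt h1 hm' c (by rw [← hzg]; exact ofLex_eq_inl.1 hc)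
      exact jlt_asymm (hA1 y hy) hppy
  · -- coordinate difference z_m < y_m
    exfalso
    have hm : m ≤ p.length := by omega
    have hztm : z.take m = p.take m := by
      rw [hz, List.take_append_of_le_length hm]
    rcases eq_or_lt_of_le hm with hm' | hm'
    · subst hm'
      have hytp : y.take p.length = p := by rw [← ht, hztm, List.take_length]
      have h7 : z.get ⟨p.length, h2⟩ = inlL δ := by
        simp only [hz, List.get_eq_getElem]
        rw [List.getElem_append_right (le_refl _)]
        simp
      have h8 := hA2 y hy h3 hytp
      rw [h7] at hlt
      exact absurd hlt (not_lt.2 h8)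
    · have hzg : z.get ⟨m, h2⟩ = p.get ⟨m, hm'⟩ := by
        simp only [hz, List.get_eq_getElem]
        exact List.getElem_append_left hm'
      have hyt : p.take m = y.take m := hztm ▸ ht
      have hppy : JLT lam p y := jlt_d3 hyt hm' h3 (hzg ▸ hlt)
      exact jlt_asymm (hA1 y hy) hppy

lemma bdd {κ : Cardinal.{0}} (hκ : κ.IsRegular) (s : Set κ.ord.ToType) (hs : Cardinal.mk s < κ) :
    ∃ δ : κ.ord.ToType, ∀ x ∈ s, x < δ := by
  have h : ∃ δ : κ.ord.ToType, ∀ x ∈ s, x < δ :=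
    not_isCofinal_iff.1 fun hc => (Order.cof_le hc).not_gt
      (by rwa [Ordinal.cof_toType, hκ.cof_eq])
  exact h

lemma toType_ne {κ : Cardinal.{0}} (hκ : κ ≠ 0) : Nonempty κ.ord.ToType := by
  refine Ordinal.toType_nonempty_iff_ne_zero.2 fun h => hκ ?_
  rw [← Cardinal.card_ord κ, h, Ordinal.card_zero]

lemma hmaxT_of_reg {κ : Cardinal.{0}} (hκ : κ.IsRegular) (c : κ.ord.ToType) : ∃ d, c < d := by
  obtain ⟨δ, hδ⟩ := bdd hκ {c}
    (by simpa using lt_of_lt_of_le Cardinal.one_lt_aleph0 hκ.aleph0_le)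
  exact ⟨δ, hδ c rfl⟩

lemma key_regular (lam : Cardinal.{0}) (hreg : lam.IsRegular)
    (θ : Cardinal.{0}) (hθreg : θ.IsRegular) (hθunc : Cardinal.aleph0 < θ) (hθlam : θ < lam)
    (t : θ.ord.ToType → List (L0 lam))
    (hdec : ∀ i j : θ.ord.ToType, i < j → JLT lam (t j) (t i)) :
    ∃ z : List (L0 lam), (∀ b i, JLT lam (z ++ [inrL b]) (t i)) ∧
      (∀ y, (∀ i, JLT lam y (t i)) →
        y = z ∨ JLT lam y z ∨ ∃ b, JLT lam y (z ++ [inrL b])) := by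
  classical
  have hmaxT : ∀ c : lam.ord.ToType, ∃ d, c < d := hmaxT_of_reg hreg
  have hmaxθ : ∀ c : θ.ord.ToType, ∃ d, c < d := hmaxT_of_reg hθreg
  have hTne : Nonempty lam.ord.ToType := toType_ne hreg.pos.ne'
  have hθne : Nonempty θ.ord.ToType := toType_ne hθreg.pos.ne'
  have hinj : ∀ i j : θ.ord.ToType, t i = t j → i = j := by
    intro i j h
    rcases lt_trichotomy i j with hij | hij | hij
    · exact absurd (h ▸ hdec i j hij) (jlt_irrefl _)
    · exact hij
    · exact absurd (h ▸ hdec j i hij) (jlt_irrefl _)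
  set P : Set ℕ := {n | ∃ p : List (L0 lam), p.length = n ∧ ∃ i₀, ∀ i, i₀ ≤ i → p <+: t i}
    with hPdef
  have hP0 : 0 ∈ P := ⟨[], rfl, Classical.arbitrary _, fun i _ => List.nil_prefix⟩
  have hPbdd : ∃ N, ∀ n ∈ P, n ≤ N := by
    by_contra hcon
    push_neg at hcon
    have hch : ∀ N : ℕ, ∃ q : List (L0 lam), ∃ i₀, N < q.length ∧ ∀ i, i₀ ≤ i → q <+: t i := by
      intro N
      obtain ⟨n, hnP, hn⟩ := hcon N
      obtain ⟨q, hql, i₀, hq⟩ := hnP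
      exact ⟨q, i₀, by omega, hq⟩
    choose q qi hq1 hq2 using hch
    have hsmall : Cardinal.mk ↥(Set.range qi) < θ :=
      lt_of_le_of_lt (le_trans Cardinal.mk_range_le (by simp)) hθunc
    obtain ⟨ib, hib⟩ := bdd hθreg _ hsmall
    have hbig : ∀ N : ℕ, N < (t ib).length := by
      intro N
      have h1 : q N <+: t ib := hq2 N ib (le_of_lt (hib _ ⟨N, rfl⟩))
      have h2 := h1.length_le
      have h3 := hq1 N
      omega
    exact absurd (hbig (t ib).length) (lt_irrefl _)
  obtain ⟨N, hN⟩ := hPbdd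
  have hPmax : ∃ ns ∈ P, (ns + 1) ∉ P := by
    by_contra hcon
    push_neg at hcon
    have hall : ∀ n, n ∈ P := by
      intro n
      induction n with
      | zero => exact hP0
      | succ k ih => exact hcon k ih
    have := hN (N + 1) (hall (N + 1))
    omega
  obtain ⟨ns, hnsP, hnsMax⟩ := hPmax
  obtain ⟨p, hplen, i₀, hp⟩ := hnsP
  subst hplen
  -- find i₁ beyond which t i properly extends p
  have hstep : ∃ i₁, i₀ ≤ i₁ ∧ ∀ i, i₁ ≤ i → t i ≠ p := by
    by_cases hex : ∃ ip, t ip = p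
    · obtain ⟨ip, hip⟩ := hex
      obtain ⟨d, hd⟩ := hmaxθ (max i₀ ip)
      refine ⟨d, le_trans (le_max_left _ _) hd.le, fun i hi h => ?_⟩
      have heq : i = ip := hinj _ _ (h.trans hip.symm)
      have hlt' : ip < i := lt_of_lt_of_le (lt_of_le_of_lt (le_max_right _ _) hd) hi
      rw [heq] at hlt'
      exact lt_irrefl _ hlt'
    · exact ⟨i₀, le_refl _, fun i _ h => hex ⟨i, h⟩⟩
  obtain ⟨i₁, hi₁0, hi₁⟩ := hstep
  have hpre : ∀ i, i₁ ≤ i → (t i).take p.length = p := by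
    intro i hi
    exact (List.prefix_iff_eq_take.1 (hp i (le_trans hi₁0 hi))).symm
  have hlen : ∀ i, i₁ ≤ i → p.length < (t i).length := by
    intro i hi
    have h1 : p <+: t i := hp i (le_trans hi₁0 hi)
    have h2 := h1.length_le
    rcases eq_or_lt_of_le h2 with h3 | h3
    · exact absurd (h1.eq_of_length h3).symm (hi₁ i hi)
    · exact h3
  obtain ⟨dflt⟩ := hTne
  set s : θ.ord.ToType → L0 lam := fun i => (t i).getD p.length (inlL dflt) with hs
  have hsget : ∀ i (h : p.length < (t i).length), (t i).get ⟨p.length, h⟩ = s i := by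
    intro i h
    rw [hs]
    exact (List.getD_eq_get _ _ ⟨p.length, h⟩).symm
  have hmono : ∀ i j, i₁ ≤ i → i ≤ j → s j ≤ s i := by
    intro i j h1 h2
    rcases eq_or_lt_of_le h2 with rfl | hij
    · exact le_refl _
    have hj1 : i₁ ≤ j := le_trans h1 h2
    obtain ⟨m, ht, hd⟩ := hdec i j hij
    have hti := hlen i h1
    have htj := hlen j hj1
    rcases lt_trichotomy m p.length with hm | rfl | hm
    · exfalso
      rcases hd with ⟨g1, g2, c, hc⟩ | ⟨g1, g2, c, hc⟩ | ⟨g2, g3, hlt'⟩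
      · omega
      · omega
      · have hteq : (t j).take p.length = (t i).take p.length := by
          rw [hpre j hj1, hpre i h1]
        obtain ⟨g3', he⟩ := get_of_take_eq hteq hm g2
        rw [he] at hlt'
        exact lt_irrefl _ hlt'
    · rcases hd with ⟨g1, g2, c, hc⟩ | ⟨g1, g2, c, hc⟩ | ⟨g2, g3, hlt'⟩
      · omega
      · omega
      · rw [hsget j g2, hsget i g3] at hlt'
        exact le_of_lt hlt'
    · obtain ⟨g', he⟩ := get_of_take_eq ht hm htj
      rw [hsget j htj] at he
      rw [hsget i g'] at he
      exact le_of_eq he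
  have hnec : ∀ (v : L0 lam) i₂, i₁ ≤ i₂ → ∃ j, i₂ ≤ j ∧ s j ≠ v := by
    intro v i₂ hi₂
    by_contra hcon
    push_neg at hcon
    apply hnsMax
    refine ⟨p ++ [v], by simp, i₂, fun i hi => ?_⟩
    have hi1 : i₁ ≤ i := le_trans hi₂ hi
    have h2 := hlen i hi1
    rw [List.prefix_iff_eq_take]
    have hlen2 : (p ++ [v]).length = p.length + 1 := by simp
    rw [hlen2, List.take_succ]
    rw [List.getElem?_eq_getElem h2]
    have : (t i)[p.length] = s i := hsget i h2
    rw [this, hcon i hi, hpre i hi1]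
    rfl
  have hltex : ∀ i, i₁ ≤ i → ∃ j, i ≤ j ∧ s j < s i := by
    intro i hi
    by_contra hcon
    push_neg at hcon
    obtain ⟨j, hj, hne'⟩ := hnec (s i) i hi
    exact hne' (le_antisymm (hmono i j hi hj) (hcon j hj))
  have hinlcof : ∀ i, i₁ ≤ i → ∃ j, i ≤ j ∧ ∃ a, s j = inlL a := by
    intro i hi
    by_contra hcon
    push_neg at hcon
    have hform : ∀ j, i ≤ j → ∃ x, s j = inrL x := by
      intro j hj
      rcases L0.cases' (s j) with ⟨a, ha⟩ | ⟨x, hx⟩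
      · exact absurd ha (hcon j hj a)
      · exact ⟨x, hx⟩
    set C : Set lam.ord.ToType := {x | ∃ j, i ≤ j ∧ s j = inrL x} with hC
    have wfT : WellFounded ((· < ·) : lam.ord.ToType → lam.ord.ToType → Prop) :=
      (inferInstance : WellFoundedLT lam.ord.ToType).wf
    have hCne : C.Nonempty := by
      obtain ⟨x, hx⟩ := hform i (le_refl _)
      exact ⟨x, i, le_refl _, hx⟩
    obtain ⟨j₀, hj₀, hsj₀⟩ := wfT.min_mem C hCne
    obtain ⟨j, hjj, hlt'⟩ := hltex j₀ (le_trans hi hj₀)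
    obtain ⟨x, hx⟩ := hform j (le_trans hj₀ hjj)
    rw [hx, hsj₀] at hlt'
    exact wfT.not_lt_min C ⟨j, le_trans hj₀ hjj, hx⟩ (inrL_lt_inrL.1 hlt')
  set A : Set lam.ord.ToType := {a | ∃ j, i₁ ≤ j ∧ s j = inlL a} with hA
  have hAnomax : ∀ a ∈ A, ∃ a' ∈ A, a < a' := by
    rintro a ⟨j, hj, hsj⟩
    obtain ⟨j', hj', hlt'⟩ := hltex j hj
    rcases L0.cases' (s j') with ⟨a', ha'⟩ | ⟨x, hx⟩
    · refine ⟨a', ⟨j', le_trans hj hj', ha'⟩, ?_⟩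
      rw [ha', hsj] at hlt'
      exact inlL_lt_inlL.1 hlt'
    · rw [hx, hsj] at hlt'
      exact absurd hlt' not_inrL_lt_inlL
  have hAsmall : Cardinal.mk ↥A < lam := by
    have hf : ∀ a : A, ∃ j, i₁ ≤ j ∧ s j = inlL (a : lam.ord.ToType) := fun a => a.2
    choose F hF1 hF2 using hf
    have hFinj : Function.Injective F := by
      intro a b h
      have h2 : inlL (a : lam.ord.ToType) = inlL (b : lam.ord.ToType) :=
        (hF2 a).symm.trans (h ▸ hF2 b)
      exact Subtype.ext (Sum.inl_injective (toLex.injective h2))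
    calc Cardinal.mk ↥A ≤ Cardinal.mk θ.ord.ToType := Cardinal.mk_le_of_injective hFinj
      _ = θ := by rw [Cardinal.mk_toType, Cardinal.card_ord]
      _ < lam := hθlam
  obtain ⟨δ₀, hδ₀⟩ := bdd hreg A hAsmall
  have wfT : WellFounded ((· < ·) : lam.ord.ToType → lam.ord.ToType → Prop) :=
    (inferInstance : WellFoundedLT lam.ord.ToType).wf
  set U : Set lam.ord.ToType := {d | ∀ a ∈ A, a < d} with hU
  have hUne : U.Nonempty := ⟨δ₀, hδ₀⟩
  set δ : lam.ord.ToType := wfT.min U hUne with hδdef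
  have hδ1 : ∀ a ∈ A, a < δ := wfT.min_mem U hUne
  have hδ2 : ∀ c, c < δ → ∃ a ∈ A, c < a := by
    intro c hc
    have hcU : c ∉ U := fun hcU => wfT.not_lt_min U hcU hc
    rw [hU] at hcU
    simp only [Set.mem_setOf_eq] at hcU
    push_neg at hcU
    obtain ⟨a, haA, hca⟩ := hcU
    obtain ⟨a', ha'A, haa'⟩ := hAnomax a haA
    exact ⟨a', ha'A, lt_of_le_of_lt hca haa'⟩
  have hcore : ∀ (l : List (L0 lam)) i, i₁ ≤ i → JLT lam (p ++ (inlL δ :: l)) (t i) := by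
    intro l i hi
    have h2 := hlen i hi
    refine jlt_d3 (n := p.length) ?_ (by simp) h2 ?_
    · rw [take_append_len, hpre i hi]
    · rw [get_append_len, hsget i h2]
      obtain ⟨j, hij, a, haj⟩ := hinlcof i hi
      have h3 : s j ≤ s i := hmono i j hi hij
      have h5 : inlL δ < inlL a := inlL_lt_inlL.2 (hδ1 a ⟨j, le_trans hi hij, haj⟩)
      rw [← haj] at h5
      exact lt_of_lt_of_le h5 h3
  have hzmem : ∀ b i, JLT lam ((p ++ [inlL δ]) ++ [inrL b]) (t i) := by
    intro b i
    rcases le_or_gt i₁ i with hi | hi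
    · have := hcore [inrL b] i hi
      simpa [List.append_assoc] using this
    · refine jlt_trans ?_ (hdec i i₁ hi)
      have := hcore [inrL b] i₁ (le_refl _)
      simpa [List.append_assoc] using this
  refine ⟨p ++ [inlL δ], hzmem, fun y hy => ?_⟩
  refine cof_lemma (Y := {y | ∀ i, JLT lam y (t i)}) hmaxT ?_ ?_ y hy
  · intro y' hy'
    obtain ⟨j, hij, a, haj⟩ := hinlcof i₁ (le_refl _)
    have hjp : JLT lam (t j) p := by
      refine jlt_d2 (n := p.length) ?_ rfl (hlen j hij) (OrderDual.toDual a) ?_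
      · rw [hpre j hij, List.take_length]
      · rw [hsget j (hlen j hij), haj]
    exact jlt_trans (hy' j) hjp
  · intro y' hy' h hpre'
    by_contra hcon
    rw [not_le] at hcon
    rcases L0.cases' (y'.get ⟨p.length, h⟩) with ⟨c, hc⟩ | ⟨c, hc⟩
    · rw [hc] at hcon
      obtain ⟨a, haA, hca⟩ := hδ2 c (inlL_lt_inlL.1 hcon)
      obtain ⟨j, hj, hsj⟩ := haA
      have hjy : JLT lam (t j) y' := by
        refine jlt_d3 (n := p.length) ?_ (hlen j hj) h ?_
        · rw [hpre j hj, hpre']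
        · rw [hsget j (hlen j hj), hsj, hc]
          exact inlL_lt_inlL.2 hca
      exact jlt_asymm (hy' j) hjy
    · obtain ⟨j, hj, a, hsj⟩ := hinlcof i₁ (le_refl _)
      have hjy : JLT lam (t j) y' := by
        refine jlt_d3 (n := p.length) ?_ (hlen j hj) h ?_
        · rw [hpre j hj, hpre']
        · rw [hsget j (hlen j hj), hsj, hc]
          exact inlL_lt_inrL _ _
      exact jlt_asymm (hy' j) hjy

lemma key_master (lam : Cardinal.{0}) (hreg : lam.IsRegular) (hunc : Cardinal.aleph0 < lam)
    (θ : Cardinal.{0})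
    (hθ : θ = 0 ∨ θ = 1 ∨ (θ.IsRegular ∧ Cardinal.aleph0 < θ ∧ θ < lam))
    (t : θ.ord.ToType → List (L0 lam))
    (hdec : ∀ i j : θ.ord.ToType, i < j → JLT lam (t j) (t i)) :
    ∃ z : List (L0 lam), (∀ b i, JLT lam (z ++ [inrL b]) (t i)) ∧
      (∀ y, (∀ i, JLT lam y (t i)) →
        y = z ∨ JLT lam y z ∨ ∃ b, JLT lam y (z ++ [inrL b])) := by
  classical
  have hmaxT : ∀ c : lam.ord.ToType, ∃ d, c < d := hmaxT_of_reg hreg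
  rcases hθ with rfl | rfl | ⟨hθreg, hθunc, hθlam⟩
  · -- θ = 0
    have hempty : IsEmpty ((0 : Cardinal).ord.ToType) := by
      rw [Cardinal.ord_zero]; infer_instance
    refine ⟨[], fun b i => hempty.elim i, fun y _ => ?_⟩
    cases y with
    | nil => exact Or.inl rfl
    | cons x l =>
      rcases L0.cases' x with ⟨a, rfl⟩ | ⟨c, rfl⟩
      · exact Or.inr (Or.inl (jlt_d2 (n := 0) (by simp) rfl (by simp) _ rfl))
      · obtain ⟨d, hd⟩ := hmaxT c
        refine Or.inr (Or.inr ⟨d, jlt_d3 (n := 0) (by simp) (by simp) (by simp) ?_⟩)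
        simpa using inrL_lt_inrL.2 hd
  · -- θ = 1
    have hord : (1 : Cardinal).ord ≠ 0 := by
      intro h
      have := Cardinal.card_ord (1 : Cardinal)
      rw [h, Ordinal.card_zero] at this
      exact one_ne_zero this.symm
    have hne1 : Nonempty ((1 : Cardinal).ord.ToType) := Ordinal.toType_nonempty_iff_ne_zero.2 hord
    have hsub : Subsingleton ((1 : Cardinal).ord.ToType) := by
      have h1 : #((1 : Cardinal).ord.ToType) = 1 := by
        rw [Cardinal.mk_toType, Cardinal.card_ord]
      exact Cardinal.le_one_iff_subsingleton.1 h1.le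
    obtain ⟨i₀⟩ := hne1
    have hTne : Nonempty lam.ord.ToType := toType_ne hreg.pos.ne'
    have wf : WellFounded ((· < ·) : lam.ord.ToType → lam.ord.ToType → Prop) :=
      (inferInstance : WellFoundedLT lam.ord.ToType).wf
    set δ := wf.min Set.univ ⟨Classical.arbitrary _, Set.mem_univ _⟩ with hδdef
    have hδle : ∀ x : lam.ord.ToType, δ ≤ x := fun x =>
      not_lt.1 (wf.not_lt_min _ (Set.mem_univ x))
    set p := t i₀ with hp
    have hmem : ∀ (l : List (L0 lam)) (i), JLT lam (p ++ (inlL δ :: l)) (t i) := by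
      intro l i
      have : i = i₀ := Subsingleton.elim _ _
      subst this
      refine jlt_d2 (n := p.length) ?_ rfl (by simp) (OrderDual.toDual δ) ?_
      · rw [take_append_len, List.take_length]
      · rw [get_append_len]
    have hA1 : ∀ y ∈ {y | ∀ i, JLT lam y (t i)}, JLT lam y p := fun y hy => hy i₀
    have hA2 : ∀ y ∈ {y | ∀ i, JLT lam y (t i)}, ∀ h : p.length < y.length,
        y.take p.length = p → y.get ⟨p.length, h⟩ ≤ inlL δ := by
      intro y hy h hpre
      obtain ⟨m, ht, hd⟩ := (hy i₀ : JLT lam y p)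
      rcases hd with ⟨h1, h2, c, hc⟩ | ⟨h1, h2, c, hc⟩ | ⟨h2, h3, hlt⟩
      · rw [← hp] at h2; omega
      · have hm : m = p.length := h1.symm
        subst hm
        rw [ofLex_eq_inl.1 hc]
        exact Sum.Lex.inl_le_inl_iff.2 (hδle _)
      · exfalso
        have hyp : y.take p.length = p.take p.length := by rw [hpre, List.take_length]
        obtain ⟨h3', he⟩ := get_of_take_eq hyp h3 h2
        rw [he] at hlt
        exact lt_irrefl _ hlt
    refine ⟨p ++ [inlL δ], fun b i => ?_, fun y hy => ?_⟩
    · have := hmem [inrL b] i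
      simpa [List.append_assoc] using this
    · exact cof_lemma hmaxT hA1 hA2 y hy
  · -- θ regular uncountable
    exact key_regular lam hreg θ hθreg hθunc hθlam t hdec


def sigmaSwap : L0 lam → L0 lam := fun x =>
  Sum.elim (fun a => inrL (OrderDual.ofDual a)) (fun b => inlL b) (ofLex x)

lemma sigmaSwap_inl (a : lam.ord.ToType) : sigmaSwap (inlL a : L0 lam) = inrL a := rfl
lemma sigmaSwap_inr (b : lam.ord.ToType) : sigmaSwap (inrL b : L0 lam) = inlL b := rfl

lemma sigmaSwap_invol : ∀ x : L0 lam, sigmaSwap (sigmaSwap x) = x := by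
  intro x
  rcases L0.cases' x with ⟨a, rfl⟩ | ⟨b, rfl⟩ <;> rfl

lemma sigmaSwap_anti : ∀ x y : L0 lam, x < y ↔ sigmaSwap y < sigmaSwap x := by
  intro x y
  rcases L0.cases' x with ⟨a, rfl⟩ | ⟨b, rfl⟩ <;>
    rcases L0.cases' y with ⟨a', rfl⟩ | ⟨b', rfl⟩ <;>
      simp only [sigmaSwap_inl, sigmaSwap_inr]
  · rw [inlL_lt_inlL, inrL_lt_inrL]
  · simp [inlL_lt_inrL, inlL_lt_inrL]
  · constructor
    · intro h; exact absurd h not_inrL_lt_inlL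
    · intro h; exact absurd h not_inrL_lt_inlL
  · rw [inrL_lt_inrL, inlL_lt_inlL]

lemma jlt_map_swap {a b : List (L0 lam)} (h : JLT lam a b) :
    JLT lam (b.map sigmaSwap) (a.map sigmaSwap) := by
  obtain ⟨n, ht, hd⟩ := h
  refine ⟨n, by rw [← List.map_take, ← List.map_take, ht], ?_⟩
  rcases hd with ⟨h1, h2, c, hc⟩ | ⟨h1, h2, c, hc⟩ | ⟨h2, h3, hlt⟩
  · refine Or.inr (Or.inl ⟨by simp [h1], by simpa using h2, OrderDual.toDual c, ?_⟩)
    have hg : (b.map sigmaSwap).get ⟨n, by simpa using h2⟩ = sigmaSwap (b.get ⟨n, h2⟩) := by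
      simp
    rw [hg, ofLex_eq_inr.1 hc]
    rfl
  · refine Or.inl ⟨by simp [h1], by simpa using h2, OrderDual.ofDual c, ?_⟩
    have hg : (a.map sigmaSwap).get ⟨n, by simpa using h2⟩ = sigmaSwap (a.get ⟨n, h2⟩) := by
      simp
    rw [hg, ofLex_eq_inl.1 hc]
    rfl
  · refine Or.inr (Or.inr ⟨by simpa using h3, by simpa using h2, ?_⟩)
    have hga : (a.map sigmaSwap).get ⟨n, by simpa using h2⟩ = sigmaSwap (a.get ⟨n, h2⟩) := by
      simp
    have hgb : (b.map sigmaSwap).get ⟨n, by simpa using h3⟩ = sigmaSwap (b.get ⟨n, h3⟩) := by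
      simp
    rw [hga, hgb]
    exact (sigmaSwap_anti _ _).1 hlt

lemma map_swap_invol (a : List (L0 lam)) : (a.map sigmaSwap).map sigmaSwap = a := by
  rw [List.map_map]
  have : (sigmaSwap ∘ sigmaSwap : L0 lam → L0 lam) = id := by
    funext x; exact sigmaSwap_invol x
  rw [this, List.map_id]


/-- If `θ` is `0`, `1`, or an uncountable regular cardinal `< λ`, and `⟨t_i : i < θ⟩` is
strictly decreasing in `J`, then the suborder `{y ∈ J : ∀ i, y <_J t_i}`, if nonempty,
has cofinality `λ` (there is a cofinal subset of cardinality `λ` and every cofinal subset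
has cardinality `≥ λ`); moreover the reverse of `J` is isomorphic to `J`. -/
theorem stmt19 (lam : Cardinal.{0}) (hreg : lam.IsRegular)
    (hunc : Cardinal.aleph0 < lam)
    (θ : Cardinal.{0})
    (hθ : θ = 0 ∨ θ = 1 ∨ (θ.IsRegular ∧ Cardinal.aleph0 < θ ∧ θ < lam))
    (t : θ.ord.ToType → List (L0 lam))
    (hdec : ∀ i j : θ.ord.ToType, i < j → JLT lam (t j) (t i)) :
    ((Set.Nonempty {y | ∀ i, JLT lam y (t i)}) →
      ((∃ S : Set (List (L0 lam)), S ⊆ {y | ∀ i, JLT lam y (t i)} ∧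
          (∀ y ∈ {y | ∀ i, JLT lam y (t i)}, ∃ z ∈ S, y = z ∨ JLT lam y z) ∧
          Cardinal.mk S = lam) ∧
        (∀ S : Set (List (L0 lam)), S ⊆ {y | ∀ i, JLT lam y (t i)} →
          (∀ y ∈ {y | ∀ i, JLT lam y (t i)}, ∃ z ∈ S, y = z ∨ JLT lam y z) →
          lam ≤ Cardinal.mk S))) ∧
    (∃ f : List (L0 lam) ≃ List (L0 lam), ∀ a b, JLT lam a b ↔ JLT lam (f b) (f a)) := by
  classical
  constructor
  · intro _hne
    obtain ⟨z, hzmem, hdich⟩ := key_master lam hreg hunc θ hθ t hdec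
    have hTne : Nonempty lam.ord.ToType := toType_ne hreg.pos.ne'
    constructor
    · refine ⟨Set.range (fun b => z ++ [inrL b]), ?_, ?_, ?_⟩
      · rintro w ⟨b, rfl⟩ i
        exact hzmem b i
      · intro y hy
        rcases hdich y hy with heq | h | ⟨b, hb⟩
        · obtain ⟨b⟩ := hTne
          refine ⟨z ++ [inrL b], ⟨b, rfl⟩, Or.inr ?_⟩
          rw [heq]
          exact jlt_snoc_inr z b
        · obtain ⟨b⟩ := hTne
          exact ⟨z ++ [inrL b], ⟨b, rfl⟩, Or.inr (jlt_trans h (jlt_snoc_inr z b))⟩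
        · exact ⟨z ++ [inrL b], ⟨b, rfl⟩, Or.inr hb⟩
      · have hinj : Function.Injective (fun b : lam.ord.ToType => z ++ [inrL b]) := by
          intro a b h
          simp only [List.append_cancel_left_eq, List.cons.injEq] at h
          exact Sum.inr_injective (toLex.injective h.1)
        rw [Cardinal.mk_range_eq _ hinj, Cardinal.mk_toType, Cardinal.card_ord]
    · intro S hS hcof
      by_contra hlt
      push_neg at hlt
      have hchoice : ∀ b : lam.ord.ToType, ∃ w, w ∈ S ∧
          (z ++ [inrL b] = w ∨ JLT lam (z ++ [inrL b]) w) := by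
        intro b
        obtain ⟨w, hw1, hw2⟩ := hcof _ (fun i => hzmem b i)
        exact ⟨w, hw1, hw2⟩
      choose g hg1 hg2 using hchoice
      obtain ⟨junk⟩ := toType_ne hreg.pos.ne' (κ := lam)
      set B : List (L0 lam) → lam.ord.ToType := fun w =>
        if h : ∃ b₀, JLT lam w (z ++ [inrL b₀]) then h.choose else junk with hB
      have hBlt : ∀ (b : lam.ord.ToType) (w), w ∈ S →
          (z ++ [inrL b] = w ∨ JLT lam (z ++ [inrL b]) w) → b < B w := by
        intro b w hw hcase
        have hwY : ∀ i, JLT lam w (t i) := hS hw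
        rcases hdich w hwY with rfl | h | ⟨b₀, hb₀⟩
        · rcases hcase with heq | hc
          · exfalso
            have := congrArg List.length heq
            simp at this
          · exact absurd (jlt_snoc_inr w b) (fun h' => jlt_asymm h' hc)
        · rcases hcase with rfl | hc
          · exact absurd (jlt_trans h (jlt_snoc_inr z b)) (jlt_irrefl _)
          · exact absurd (jlt_trans (jlt_trans hc h) (jlt_snoc_inr z b)) (jlt_irrefl _)
        · have hex : ∃ b₀', JLT lam w (z ++ [inrL b₀']) := ⟨b₀, hb₀⟩
          have hBw : JLT lam w (z ++ [inrL (B w)]) := by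
            rw [hB]
            simp only [dif_pos hex]
            exact hex.choose_spec
          have hlt2 : JLT lam (z ++ [inrL b]) (z ++ [inrL (B w)]) := by
            rcases hcase with rfl | hc
            · exact hBw
            · exact jlt_trans hc hBw
          rcases lt_trichotomy b (B w) with h' | h' | h'
          · exact h'
          · exact absurd (h' ▸ hlt2) (jlt_irrefl _)
          · exact absurd (jlt_trans hlt2 (jlt_snoc_inr_mono z h')) (jlt_irrefl _)
      have hEsmall : Cardinal.mk ↥(B '' S) < lam := lt_of_le_of_lt Cardinal.mk_image_le hlt
      obtain ⟨δ', hδ'⟩ := bdd hreg (B '' S) hEsmall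
      have h1 := hBlt δ' (g δ') (hg1 δ') (hg2 δ')
      have h2 : B (g δ') < δ' := hδ' _ ⟨g δ', hg1 δ', rfl⟩
      exact absurd (h1.trans h2) (lt_irrefl δ')
  · refine ⟨⟨List.map sigmaSwap, List.map sigmaSwap, map_swap_invol, map_swap_invol⟩,
      fun a b => ?_⟩
    simp only [Equiv.coe_fn_mk]
    refine ⟨fun h => jlt_map_swap h, fun h => ?_⟩
    have := jlt_map_swap h
    rwa [map_swap_invol, map_swap_invol] at this
end
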